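/- arXiv:2601.09122 — 4 statements merged into one kernel-verified Lean document; each statement's English description precedes it below -/
import Mathlib

section
/- Lemma B.1 (uniform control of the posterior-to-Gaussian density ratio on growing balls). Let (α_n) be a positive sequence with α_n → 0 and n·α_n → ∞, and assume (A0), (A1) and (A2). Then for every η > 0 and every ε > 0 there exist an integer N = N(η,ε) and a sequence r_n → ∞ such that for every n with α_n·n > N: (1) with P_n-probability at least 1 − ε/2, π^{LAN}_{n,α_n}(h) > 0 for all h with ‖h‖₂ ≤ r_n, so that f_n(g,h) is well defined for all g, h in the closed ball of radius r_n about 0; and (2) P_n( sup_{‖g‖₂ ≤ r_n, ‖h‖₂ ≤ r_n} f_n(g,h) > η ) < ε. -/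
open MeasureTheory Filter BigOperators

noncomputable section

/-- Multivariate Gaussian density `φ(θ | μ, S)` with mean `μ` and covariance matrix `S`. -/
def gaussDensity (p : ℕ) (μ : EuclideanSpace ℝ (Fin p))
    (S : Matrix (Fin p) (Fin p) ℝ) (θ : EuclideanSpace ℝ (Fin p)) : ℝ :=
  (2 * Real.pi) ^ (-(p : ℝ) / 2) * S.det ^ (-(1 : ℝ) / 2) *
    Real.exp (-(1 / 2) * ∑ i, ∑ j, (θ i - μ i) * S⁻¹ i j * (θ j - μ j))

/-- The tempered (`α`-)posterior density. -/
def post {p : ℕ} {Ω : Type} (L : Ω → EuclideanSpace ℝ (Fin p) → ℝ)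
    (prior : EuclideanSpace ℝ (Fin p) → ℝ) (α : ℝ) (ω : Ω)
    (θ : EuclideanSpace ℝ (Fin p)) : ℝ :=
  L ω θ ^ α * prior θ / ∫ θ', L ω θ' ^ α * prior θ'

/-- Convergence in `P n`-probability of a sequence of random vectors to a constant. -/
def TendstoInProb {Ω : ℕ → Type} [∀ n, MeasurableSpace (Ω n)]
    (P : ∀ n, Measure (Ω n)) {E : Type*} [NormedAddCommGroup E]
    (Y : ∀ n, Ω n → E) (y : E) : Prop :=
  ∀ ε : ℝ, 0 < ε →
    Tendsto (fun n => P n {ω | ε < ‖Y n ω - y‖}) atTop (nhds 0)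

/-- Assumption (A0): consistency and asymptotic normality of the MLE. -/
def A0 {p : ℕ} {Ω : ℕ → Type} [∀ n, MeasurableSpace (Ω n)] (P : ∀ n, Measure (Ω n))
    (θhat : ∀ n, Ω n → EuclideanSpace ℝ (Fin p)) (θstar : EuclideanSpace ℝ (Fin p)) : Prop :=
  TendstoInProb P θhat θstar ∧
  ∃ S : Matrix (Fin p) (Fin p) ℝ, S.IsSymm ∧ S.PosDef ∧
    ∀ f : EuclideanSpace ℝ (Fin p) → ℝ, Continuous f → (∃ C, ∀ x, |f x| ≤ C) →
      Tendsto (fun n => ∫ ω, f ((Real.sqrt n) • (θhat n ω - θstar)) ∂ P n) atTop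
        (nhds (∫ x, f x * gaussDensity p 0 S x))

/-- Assumption (A1): the prior is continuous and positive near `θstar`. -/
def A1 {p : ℕ} (prior : EuclideanSpace ℝ (Fin p) → ℝ)
    (θstar : EuclideanSpace ℝ (Fin p)) : Prop :=
  ∃ δ : ℝ, 0 < δ ∧ ContinuousOn prior (Metric.ball θstar δ) ∧
    ∀ θ ∈ Metric.ball θstar δ, 0 < prior θ

/-- Assumption (A2): tempered local asymptotic normality with matrix `V`. -/
def A2 {p : ℕ} {Ω : ℕ → Type} [∀ n, MeasurableSpace (Ω n)] (P : ∀ n, Measure (Ω n))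
    (L : ∀ n, Ω n → EuclideanSpace ℝ (Fin p) → ℝ)
    (θhat : ∀ n, Ω n → EuclideanSpace ℝ (Fin p)) (θstar : EuclideanSpace ℝ (Fin p))
    (α : ℕ → ℝ) (V : Matrix (Fin p) (Fin p) ℝ) : Prop :=
  V.IsSymm ∧ V.PosDef ∧
  ∀ r : ℝ, 0 < r → ∀ ε : ℝ, 0 < ε →
    Tendsto (fun n => P n {ω | ∃ h : EuclideanSpace ℝ (Fin p), ‖h‖ ≤ r ∧
      ε < |α n * (Real.log (L n ω (θstar + (Real.sqrt (α n * (n : ℝ)))⁻¹ • h)) -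
              Real.log (L n ω θstar))
            - Real.sqrt (α n) *
                ∑ i, ∑ j, h i * V i j * (Real.sqrt n * (θhat n ω j - θstar j))
            + (1 / 2) * ∑ i, ∑ j, h i * V i j * h j|}) atTop (nhds 0)

/-- Assumption (A3): all rescaled posterior moments are bounded in probability. -/
def A3 {p : ℕ} {Ω : ℕ → Type} [∀ n, MeasurableSpace (Ω n)] (P : ∀ n, Measure (Ω n))
    (L : ∀ n, Ω n → EuclideanSpace ℝ (Fin p) → ℝ)
    (prior : EuclideanSpace ℝ (Fin p) → ℝ) (θstar : EuclideanSpace ℝ (Fin p))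
    (α : ℕ → ℝ) : Prop :=
  ∀ ε : ℝ, 0 < ε → ∀ k₀ : ℝ, 0 ≤ k₀ → ∃ M : ℝ, ∃ N : ℕ, ∀ n : ℕ,
    (N : ℝ) ≤ α n * n →
    P n {ω | M < ∫ θ, ‖Real.sqrt (α n * (n : ℝ)) • (θ - θstar)‖ ^ k₀ *
        post (L n) prior (α n) ω θ} < ENNReal.ofReal ε

/-- Conditions 1 and 2 (with a common radius `r`): salience of the pseudo-true parameter
and local quadratic behavior of the log-likelihood near the MLE. -/
def Conds12 {p : ℕ} {Ω : ℕ → Type} [∀ n, MeasurableSpace (Ω n)] (P : ∀ n, Measure (Ω n))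
    (L : ∀ n, Ω n → EuclideanSpace ℝ (Fin p) → ℝ)
    (θhat : ∀ n, Ω n → EuclideanSpace ℝ (Fin p))
    (θstar : EuclideanSpace ℝ (Fin p)) : Prop :=
  ∃ Lc c₀ c₁ c₂ r : ℝ, ∃ γfun : ℝ → ℝ,
    0 < Lc ∧ 0 < c₀ ∧ 0 < c₁ ∧ 0 ≤ c₂ ∧ Real.exp (c₂ / c₀) / c₁ < r ∧
    (∀ v : ℝ, 0 ≤ v → 0 ≤ γfun v) ∧
    (∀ v : ℝ, r ≤ v → c₀ * Real.log (1 + c₁ * v) - c₂ ≤ γfun v) ∧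
    Tendsto (fun n => P n {ω | ∀ θ, r ≤ ‖θ - θstar‖ →
        Real.log (L n ω θ) - Real.log (L n ω θstar) ≤
          -(Lc * (n : ℝ) * γfun ‖θ - θstar‖)}) atTop (nhds 1) ∧
    ∃ c₃ c₄ : ℝ, 0 < c₃ ∧ 0 < c₄ ∧
      Tendsto (fun n => P n {ω | ∀ θ, ‖θ - θhat n ω‖ < 2 * r →
          -((n : ℝ) * c₃ * ‖θ - θhat n ω‖ ^ 2) ≤
              Real.log (L n ω θ) - Real.log (L n ω (θhat n ω)) ∧
            Real.log (L n ω θ) - Real.log (L n ω (θhat n ω)) ≤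
              -((n : ℝ) * c₄ * ‖θ - θhat n ω‖ ^ 2)}) atTop (nhds 1)


/-- Assumption (A1'): the prior is positive and C² near `θstar`, with finite mean. -/
def A1' {p : ℕ} (prior : EuclideanSpace ℝ (Fin p) → ℝ)
    (θstar : EuclideanSpace ℝ (Fin p)) : Prop :=
  (∃ δ : ℝ, 0 < δ ∧ (∀ θ ∈ Metric.ball θstar δ, 0 < prior θ) ∧
    ContDiffOn ℝ 2 prior (Metric.ball θstar δ)) ∧
  Integrable (fun θ : EuclideanSpace ℝ (Fin p) => ‖θ‖ * prior θ)

/-- Assumption (A2'): higher-order tempered LAN centered at the MLE, with data `H` and `S`. -/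
def A2' {p : ℕ} {Ω : ℕ → Type} [∀ n, MeasurableSpace (Ω n)] (P : ∀ n, Measure (Ω n))
    (L : ∀ n, Ω n → EuclideanSpace ℝ (Fin p) → ℝ)
    (θhat : ∀ n, Ω n → EuclideanSpace ℝ (Fin p)) (α : ℕ → ℝ)
    (H : ∀ n, Ω n → Matrix (Fin p) (Fin p) ℝ)
    (S : ∀ n, Ω n → Fin p → Fin p → Fin p → ℝ) : Prop :=
  Tendsto (fun n => P n {ω | (H n ω).IsSymm ∧ (H n ω).PosDef}) atTop (nhds 1) ∧
  ∃ M : ℝ, ∃ δ : ℝ, 0 < δ ∧ ∀ ε : ℝ, 0 < ε → ∃ N : ℕ, ∀ n ≥ N,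
    P n {ω | ∃ h : EuclideanSpace ℝ (Fin p), ‖h‖ ≤ δ * Real.sqrt (α n * (n : ℝ)) ∧
      (M / (α n * (n : ℝ))) * ‖h‖ ^ 4 <
        α n * (Real.log (L n ω (θhat n ω + (Real.sqrt (α n * (n : ℝ)))⁻¹ • h)) -
            Real.log (L n ω (θhat n ω)))
          + (1 / 2) * ∑ i, ∑ j, h i * H n ω i j * h j
          - (6 * Real.sqrt (α n * (n : ℝ)))⁻¹ *
              ∑ i, ∑ j, ∑ k, S n ω i j k * h i * h j * h k} < ENNReal.ofReal ε

/-- Assumption (A3'): salience of the MLE. -/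
def A3' {p : ℕ} {Ω : ℕ → Type} [∀ n, MeasurableSpace (Ω n)] (P : ∀ n, Measure (Ω n))
    (L : ∀ n, Ω n → EuclideanSpace ℝ (Fin p) → ℝ)
    (θhat : ∀ n, Ω n → EuclideanSpace ℝ (Fin p)) : Prop :=
  ∀ ε : ℝ, 0 < ε → ∀ δ' : ℝ, 0 < δ' → ∃ c : ℝ, 0 < c ∧ ∃ N : ℕ, ∀ n ≥ N,
    P n {ω | ∃ θ, δ' ≤ ‖θ - θhat n ω‖ ∧
      -c < (n : ℝ)⁻¹ * (Real.log (L n ω θ) - Real.log (L n ω (θhat n ω)))}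
      < ENNReal.ofReal ε

/-- Condition (ALap) for the function `b` in the Laplace approximation. -/
def ALap {p : ℕ} {Ω : ℕ → Type} [∀ n, MeasurableSpace (Ω n)] (P : ∀ n, Measure (Ω n))
    (θhat : ∀ n, Ω n → EuclideanSpace ℝ (Fin p)) (θstar : EuclideanSpace ℝ (Fin p))
    (α : ℕ → ℝ) (b : EuclideanSpace ℝ (Fin p) → ℝ) : Prop :=
  Integrable b ∧
  (∃ δ : ℝ, 0 < δ ∧ ∃ C : ℝ, ∀ θ ∈ Metric.ball θstar δ, |b θ| ≤ C) ∧
  ∃ v : ∀ n, Ω n → EuclideanSpace ℝ (Fin p), ∃ M : ℝ, ∃ δ : ℝ, 0 < δ ∧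
    ∀ ε : ℝ, 0 < ε → ∃ N : ℕ, ∀ n ≥ N,
      P n {ω | ∃ h : EuclideanSpace ℝ (Fin p), ‖h‖ ≤ δ * Real.sqrt (α n * (n : ℝ)) ∧
        (∑ i, v n ω i * h i) / Real.sqrt (α n * (n : ℝ)) + (M / (α n * (n : ℝ))) * ‖h‖ ^ 2 <
          b (θhat n ω + (Real.sqrt (α n * (n : ℝ)))⁻¹ • h) - b (θhat n ω)}
        < ENNReal.ofReal ε

/-- The posterior mean as a vector in Euclidean space. -/
def postMean {p : ℕ} {Ω : Type} (L : Ω → EuclideanSpace ℝ (Fin p) → ℝ)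
    (prior : EuclideanSpace ℝ (Fin p) → ℝ) (α : ℝ) (ω : Ω) :
    EuclideanSpace ℝ (Fin p) :=
  (WithLp.equiv 2 (Fin p → ℝ)).symm (fun j => ∫ θ, θ j * post L prior α ω θ)

/-- A coupling of two measures. -/
def IsCoupling {X : Type} [MeasurableSpace X] (μ ν : Measure X)
    (γ : Measure (X × X)) : Prop :=
  IsProbabilityMeasure γ ∧ γ.map Prod.fst = μ ∧ γ.map Prod.snd = ν

/-- The `s`-Wasserstein distance. -/
def wassersteinDist {X : Type} [MeasurableSpace X] [PseudoMetricSpace X]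
    (s : ℝ) (μ ν : Measure X) : ℝ :=
  sInf {c : ℝ | ∃ γ : Measure (X × X), IsCoupling μ ν γ ∧
    c = (∫ x : X × X, dist x.1 x.2 ^ s ∂γ) ^ (1 / s)}

/-- The total variation distance between two measures. -/
def tvDist {X : Type} [MeasurableSpace X] (μ ν : Measure X) : ℝ :=
  sSup {x : ℝ | ∃ A : Set X, MeasurableSet A ∧ x = |(μ A).toReal - (ν A).toReal|}

/-- Standard basis vector of Euclidean space. -/
def basisE (p : ℕ) (i : Fin p) : EuclideanSpace ℝ (Fin p) :=
  EuclideanSpace.single i (1 : ℝ)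

/-- First directional partial derivative. -/
def d1 {p : ℕ} (g : EuclideanSpace ℝ (Fin p) → ℝ) (θ : EuclideanSpace ℝ (Fin p))
    (i : Fin p) : ℝ :=
  fderiv ℝ g θ (basisE p i)

/-- Second-order partial derivative. -/
def d2 {p : ℕ} (g : EuclideanSpace ℝ (Fin p) → ℝ) (θ : EuclideanSpace ℝ (Fin p))
    (i j : Fin p) : ℝ :=
  fderiv ℝ (fun θ' => d1 g θ' j) θ (basisE p i)

/-- Third-order partial derivative. -/
def d3 {p : ℕ} (g : EuclideanSpace ℝ (Fin p) → ℝ) (θ : EuclideanSpace ℝ (Fin p))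
    (i j k : Fin p) : ℝ :=
  fderiv ℝ (fun θ' => d2 g θ' j k) θ (basisE p i)

/-- Fourth-order partial derivative. -/
def d4 {p : ℕ} (g : EuclideanSpace ℝ (Fin p) → ℝ) (θ : EuclideanSpace ℝ (Fin p))
    (i j k l : Fin p) : ℝ :=
  fderiv ℝ (fun θ' => d3 g θ' j k l) θ (basisE p i)


/-- Auxiliary: ratio of products of exponentials. -/
lemma ratio_exp_aux (C2 K : ℝ) (hC2 : C2 ≠ 0) (hK : K ≠ 0) (A B C D : ℝ) :
    C2 * Real.exp A * (K * Real.exp B) / (K * Real.exp C * (C2 * Real.exp D))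
      = Real.exp (A + B - (C + D)) := by
  rw [Real.exp_sub, Real.exp_add, Real.exp_add]
  field_simp

/-- Auxiliary: the real square root tends to infinity. -/
lemma sqrt_tendsto_atTop_aux : Filter.Tendsto Real.sqrt atTop atTop := by
  refine tendsto_atTop_atTop.mpr fun b => ⟨b ^ 2, fun x hx => ?_⟩
  calc b ≤ |b| := le_abs_self b
    _ = Real.sqrt (b ^ 2) := (Real.sqrt_sq_eq_abs b).symm
    _ ≤ Real.sqrt x := Real.sqrt_le_sqrt hx

set_option maxHeartbeats 2000000 in
/-- **Lemma B.1** (uniform control of the posterior-to-Gaussian density ratio on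
growing balls). -/
theorem density_ratio_control_on_growing_balls
    {p : ℕ} {Ω : ℕ → Type} [∀ n, MeasurableSpace (Ω n)]
    (P : ∀ n, Measure (Ω n)) [∀ n, IsProbabilityMeasure (P n)]
    (L : ∀ n, Ω n → EuclideanSpace ℝ (Fin p) → ℝ)
    (prior : EuclideanSpace ℝ (Fin p) → ℝ)
    (θhat : ∀ n, Ω n → EuclideanSpace ℝ (Fin p))
    (θstar : EuclideanSpace ℝ (Fin p))
    (V : Matrix (Fin p) (Fin p) ℝ)
    (α : ℕ → ℝ)
    -- basic regularity of the model
    (hLmeas : ∀ n, Measurable (Function.uncurry (L n)))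
    (hLpos : ∀ n ω θ, 0 < L n ω θ)
    (hpriormeas : Measurable prior)
    (hpriornn : ∀ θ, 0 ≤ prior θ)
    (hpriorint : ∫ θ, prior θ = 1)
    (hθmeas : ∀ n, Measurable (θhat n))
    (hMLE : ∀ n ω θ, θ ≠ θhat n ω → L n ω θ < L n ω (θhat n ω))
    (hZ : ∀ n ω, Integrable (fun θ => L n ω θ ^ (α n) * prior θ) ∧
        0 < ∫ θ, L n ω θ ^ (α n) * prior θ)
    -- tempering sequence: `α n → 0` and `n * α n → ∞`
    (hαpos : ∀ n, 0 < α n)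
    (hα0 : Tendsto α atTop (nhds 0))
    (hαn : Tendsto (fun n => α n * (n : ℝ)) atTop atTop)
    -- assumptions (A0)-(A2)
    (hA0 : A0 P θhat θstar)
    (hA1 : A1 prior θstar)
    (hA2 : A2 P L θhat θstar α V) :
    ∀ η : ℝ, 0 < η → ∀ ε : ℝ, 0 < ε → ∃ N : ℕ, ∃ r : ℕ → ℝ,
      Tendsto r atTop atTop ∧
      ∀ n : ℕ, (N : ℝ) < α n * n →
        -- (1) the rescaled posterior density is positive on the ball of radius `r n`
        --     with probability at least `1 - ε/2`, so `f n (g, h)` is well defined there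
        (ENNReal.ofReal (1 - ε / 2) ≤
          P n {ω | ∀ h : EuclideanSpace ℝ (Fin p), ‖h‖ ≤ r n →
            0 < (α n * (n : ℝ)) ^ (-(p : ℝ) / 2) *
              post (L n) prior (α n) ω (θstar + (Real.sqrt (α n * (n : ℝ)))⁻¹ • h)}) ∧
        -- (2) the density-ratio functional is uniformly small on the ball
        P n {ω | ∃ g h : EuclideanSpace ℝ (Fin p), ‖g‖ ≤ r n ∧ ‖h‖ ≤ r n ∧
          η < max 0 (1 -
            (gaussDensity p (Real.sqrt (α n * (n : ℝ)) • (θhat n ω - θstar)) V⁻¹ h *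
              ((α n * (n : ℝ)) ^ (-(p : ℝ) / 2) *
                post (L n) prior (α n) ω (θstar + (Real.sqrt (α n * (n : ℝ)))⁻¹ • g))) /
            (((α n * (n : ℝ)) ^ (-(p : ℝ) / 2) *
                post (L n) prior (α n) ω (θstar + (Real.sqrt (α n * (n : ℝ)))⁻¹ • h)) *
              gaussDensity p (Real.sqrt (α n * (n : ℝ)) • (θhat n ω - θstar)) V⁻¹ g))}
          < ENNReal.ofReal ε := by
  suffices H : ∀ η : ℝ, 0 < η → η < 1 → ∀ ε : ℝ, 0 < ε → ∃ N : ℕ, ∃ r : ℕ → ℝ,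
      Tendsto r atTop atTop ∧
      ∀ n : ℕ, (N : ℝ) < α n * n →
        (ENNReal.ofReal (1 - ε / 2) ≤
          P n {ω | ∀ h : EuclideanSpace ℝ (Fin p), ‖h‖ ≤ r n →
            0 < (α n * (n : ℝ)) ^ (-(p : ℝ) / 2) *
              post (L n) prior (α n) ω (θstar + (Real.sqrt (α n * (n : ℝ)))⁻¹ • h)}) ∧
        P n {ω | ∃ g h : EuclideanSpace ℝ (Fin p), ‖g‖ ≤ r n ∧ ‖h‖ ≤ r n ∧
          η < max 0 (1 -
            (gaussDensity p (Real.sqrt (α n * (n : ℝ)) • (θhat n ω - θstar)) V⁻¹ h *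
              ((α n * (n : ℝ)) ^ (-(p : ℝ) / 2) *
                post (L n) prior (α n) ω (θstar + (Real.sqrt (α n * (n : ℝ)))⁻¹ • g))) /
            (((α n * (n : ℝ)) ^ (-(p : ℝ) / 2) *
                post (L n) prior (α n) ω (θstar + (Real.sqrt (α n * (n : ℝ)))⁻¹ • h)) *
              gaussDensity p (Real.sqrt (α n * (n : ℝ)) • (θhat n ω - θstar)) V⁻¹ g))}
          < ENNReal.ofReal ε by
    intro η hη ε hε
    rcases lt_or_ge η 1 with h1 | h1
    · exact H η hη h1 ε hε
    · obtain ⟨N, r, hr, hH⟩ := H 2⁻¹ (by norm_num) (by norm_num) ε hε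
      refine ⟨N, r, hr, fun n hn => ⟨(hH n hn).1, lt_of_le_of_lt (measure_mono ?_) (hH n hn).2⟩⟩
      rintro ω ⟨g, h, hg, hh, hgt⟩
      exact ⟨g, h, hg, hh, lt_trans (lt_of_lt_of_le (by norm_num : (2:ℝ)⁻¹ < 1) h1) hgt⟩
  clear hα0 hA0 hMLE hLmeas hpriormeas hpriorint hθmeas hpriornn
  intro η hη hη1 ε hε
  -- prior facts
  obtain ⟨δ, hδpos, hδcont, hδpos'⟩ := hA1
  have hpstar : 0 < prior θstar := hδpos' θstar (Metric.mem_ball_self hδpos)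
  -- the quantity `s`
  set s : ℝ := -Real.log (1 - η) / 2 with hs_def
  have hlog : Real.log (1 - η) < 0 := Real.log_neg (by linarith) (by linarith)
  have hs : 0 < s := by rw [hs_def]; linarith
  have h2s : -(2 * s) = Real.log (1 - η) := by rw [hs_def]; ring
  have hexp2s : Real.exp (-(2 * s)) = 1 - η := by
    rw [h2s, Real.exp_log (by linarith)]
  -- continuity of the log prior at θstar
  have hca : ContinuousAt prior θstar :=
    hδcont.continuousAt (Metric.isOpen_ball.mem_nhds (Metric.mem_ball_self hδpos))
  have hlogca : ContinuousAt (fun θ => Real.log (prior θ)) θstar :=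
    (Real.continuousAt_log (ne_of_gt hpstar)).comp hca
  obtain ⟨δ₂, hδ₂pos, hδ₂⟩ := Metric.continuousAt_iff.mp hlogca (s / 2) (half_pos hs)
  set δ' : ℝ := min δ δ₂ / 2 with hδ'def
  have hmin : 0 < min δ δ₂ := lt_min hδpos hδ₂pos
  have hδ'pos : 0 < δ' := by rw [hδ'def]; linarith
  have hδ'δ : δ' < δ := by
    have := min_le_left δ δ₂; rw [hδ'def]; linarith
  have hδ'δ₂ : δ' < δ₂ := by
    have := min_le_right δ δ₂; rw [hδ'def]; linarith
  -- assumption (A2)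
  obtain ⟨hVs, hVpd, hA2'⟩ := hA2
  -- thresholds from (A2) for each integer radius
  choose N0 hN0 using fun k : ℕ =>
    Filter.eventually_atTop.mp
      ((hA2' ((k : ℝ) + 1) (by positivity) (s / 2) (half_pos hs)).eventually_lt_const
        (ENNReal.ofReal_pos.mpr hε))
  -- monotone envelope of the thresholds
  set Nm : ℕ → ℕ := fun k => (Finset.range (k + 1)).sup N0 + k with hNm_def
  have hNm_self : ∀ k, N0 k ≤ Nm k := fun k =>
    le_trans (Finset.le_sup (Finset.self_mem_range_succ k)) (Nat.le_add_right _ _)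
  have hNm_k : ∀ k, k ≤ Nm k := fun k => Nat.le_add_left k _
  -- the integer radius sequence
  set c : ℕ → ℕ := fun n => Nat.findGreatest (fun k => Nm k ≤ n) n with hc_def
  have hc_le : ∀ n, Nm 0 ≤ n → Nm (c n) ≤ n := fun n hn =>
    Nat.findGreatest_spec (P := fun k => Nm k ≤ n) (Nat.zero_le n) hn
  have hc_ge : ∀ k n, Nm k ≤ n → k ≤ c n := fun k n hk =>
    Nat.le_findGreatest (le_trans (hNm_k k) hk) hk
  have hc_tendsto : Tendsto (fun n => ((c n : ℕ) : ℝ)) atTop atTop :=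
    tendsto_natCast_atTop_atTop.comp
      (tendsto_atTop_atTop.mpr fun k => ⟨Nm k, fun n hn => hc_ge k n hn⟩)
  -- the radius sequence
  have hsqrt : Tendsto (fun n => Real.sqrt (α n * n)) atTop atTop :=
    sqrt_tendsto_atTop_aux.comp hαn
  set r : ℕ → ℝ := fun n => min ((c n : ℕ) : ℝ) (δ' * Real.sqrt (α n * n)) with hr_def
  have hrt : Tendsto r atTop atTop := by
    refine tendsto_atTop.mpr fun b => ?_
    filter_upwards [hc_tendsto.eventually_ge_atTop b,
      (hsqrt.const_mul_atTop hδ'pos).eventually_ge_atTop b] with n h1 h2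
    exact le_min h1 h2
  -- the threshold N
  refine ⟨(Finset.range (Nm 0)).sup (fun m => ⌈α m * m⌉₊), r, hrt, fun n hn => ?_⟩
  have hNnn : (0 : ℝ) ≤ (((Finset.range (Nm 0)).sup (fun m => ⌈α m * m⌉₊) : ℕ) : ℝ) :=
    Nat.cast_nonneg _
  have ham : 0 < α n * n := lt_of_le_of_lt hNnn hn
  have hnM : Nm 0 ≤ n := by
    by_contra hcon
    push_neg at hcon
    have h1 : ⌈α n * n⌉₊ ≤ (Finset.range (Nm 0)).sup (fun m => ⌈α m * m⌉₊) :=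
      Finset.le_sup (f := fun m => ⌈α m * m⌉₊) (Finset.mem_range.mpr hcon)
    have h2 : α n * n ≤ (((Finset.range (Nm 0)).sup (fun m => ⌈α m * m⌉₊) : ℕ) : ℝ) :=
      le_trans (Nat.le_ceil _) (Nat.cast_le.mpr h1)
    linarith
  have ht : 0 < Real.sqrt (α n * n) := Real.sqrt_pos.mpr ham
  have hrle1 : r n ≤ ((c n : ℕ) : ℝ) := min_le_left _ _
  have hrle2 : r n ≤ δ' * Real.sqrt (α n * n) := min_le_right _ _
  -- scaled points stay in a small ball around θstar
  have hball : ∀ x : EuclideanSpace ℝ (Fin p), ‖x‖ ≤ r n →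
      dist (θstar + (Real.sqrt (α n * (n : ℝ)))⁻¹ • x) θstar ≤ δ' := by
    intro x hx
    have hd : dist (θstar + (Real.sqrt (α n * (n : ℝ)))⁻¹ • x) θstar
        = (Real.sqrt (α n * n))⁻¹ * ‖x‖ := by
      rw [dist_eq_norm, add_sub_cancel_left, norm_smul, Real.norm_eq_abs,
        abs_of_nonneg (inv_nonneg.mpr ht.le)]
    rw [hd]
    have hx' : ‖x‖ ≤ δ' * Real.sqrt (α n * n) := le_trans hx hrle2
    calc (Real.sqrt (α n * (n : ℝ)))⁻¹ * ‖x‖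
        ≤ (Real.sqrt (α n * (n : ℝ)))⁻¹ * (δ' * Real.sqrt (α n * n)) :=
          mul_le_mul_of_nonneg_left hx' (inv_nonneg.mpr ht.le)
      _ = δ' := by
          rw [mul_comm, mul_assoc, mul_inv_cancel₀ (ne_of_gt ht), mul_one]
  have hpriorpos : ∀ x : EuclideanSpace ℝ (Fin p), ‖x‖ ≤ r n →
      0 < prior (θstar + (Real.sqrt (α n * (n : ℝ)))⁻¹ • x) := fun x hx =>
    hδpos' _ (Metric.mem_ball.mpr (lt_of_le_of_lt (hball x hx) hδ'δ))
  have hlogprior : ∀ x : EuclideanSpace ℝ (Fin p), ‖x‖ ≤ r n →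
      |Real.log (prior (θstar + (Real.sqrt (α n * (n : ℝ)))⁻¹ • x)) -
        Real.log (prior θstar)| < s / 2 := by
    intro x hx
    have := hδ₂ (lt_of_le_of_lt (hball x hx) hδ'δ₂)
    rwa [Real.dist_eq] at this
  constructor
  · -- part (1): positivity holds surely
    have huniv : {ω : Ω n | ∀ h : EuclideanSpace ℝ (Fin p), ‖h‖ ≤ r n →
        0 < (α n * (n : ℝ)) ^ (-(p : ℝ) / 2) *
          post (L n) prior (α n) ω (θstar + (Real.sqrt (α n * (n : ℝ)))⁻¹ • h)} = Set.univ := by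
      refine Set.eq_univ_iff_forall.mpr fun ω h hh => ?_
      simp only [post]
      exact mul_pos (Real.rpow_pos_of_pos ham _)
        (div_pos (mul_pos (Real.rpow_pos_of_pos (hLpos n ω _) _) (hpriorpos h hh))
          (hZ n ω).2)
    rw [huniv, measure_univ]
    exact ENNReal.ofReal_le_one.mpr (by linarith)
  · -- part (2)
    have hfinal := hN0 (c n) n (le_trans (hNm_self (c n)) (hc_le n hnM))
    refine lt_of_le_of_lt (measure_mono ?_) hfinal
    rintro ω ⟨g, h, hg, hh, hgt⟩
    by_contra hnot
    simp only [Set.mem_setOf_eq, not_exists, not_and, not_lt] at hnot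
    -- hnot : ∀ x, ‖x‖ ≤ (c n : ℝ) + 1 → |…| ≤ s / 2
    set t : ℝ := Real.sqrt (α n * (n : ℝ)) with ht_def
    have htsplit : t = Real.sqrt (α n) * Real.sqrt (n : ℝ) := by
      rw [ht_def]; exact Real.sqrt_mul (hαpos n).le _
    have hrc : r n ≤ ((c n : ℕ) : ℝ) + 1 := le_trans hrle1 (by linarith)
    have hρg := hnot g (le_trans hg hrc)
    have hρh := hnot h (le_trans hh hrc)
    -- matrix facts
    have hVdet : IsUnit V.det := isUnit_iff_ne_zero.mpr (ne_of_gt hVpd.det_pos)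
    have hVV : (V⁻¹)⁻¹ = V := Matrix.nonsing_inv_nonsing_inv V hVdet
    have hdetinvpos : 0 < (V⁻¹).det := hVpd.inv.det_pos
    have hc2 : 0 < (2 * Real.pi) ^ (-(p : ℝ) / 2) * (V⁻¹).det ^ (-(1 : ℝ) / 2) :=
      mul_pos (Real.rpow_pos_of_pos (by positivity) _) (Real.rpow_pos_of_pos hdetinvpos _)
    have hKpos : 0 < (α n * (n : ℝ)) ^ (-(p : ℝ) / 2) / ∫ θ', L n ω θ' ^ (α n) * prior θ' :=
      div_pos (Real.rpow_pos_of_pos ham _) (hZ n ω).2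
    -- the Gaussian density as a constant times an exponential
    have hPhi : ∀ x : EuclideanSpace ℝ (Fin p),
        gaussDensity p (t • (θhat n ω - θstar)) V⁻¹ x
          = ((2 * Real.pi) ^ (-(p : ℝ) / 2) * (V⁻¹).det ^ (-(1 : ℝ) / 2)) *
            Real.exp (-(1 / 2) * ∑ i, ∑ j, (x i - t * (θhat n ω i - θstar i)) * V i j *
              (x j - t * (θhat n ω j - θstar j))) := by
      intro x
      simp only [gaussDensity, hVV, PiLp.smul_apply, PiLp.sub_apply, smul_eq_mul]
    -- the rescaled posterior as a constant times an exponential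
    have hApost : ∀ x : EuclideanSpace ℝ (Fin p), ‖x‖ ≤ r n →
        (α n * (n : ℝ)) ^ (-(p : ℝ) / 2) * post (L n) prior (α n) ω (θstar + t⁻¹ • x)
          = ((α n * (n : ℝ)) ^ (-(p : ℝ) / 2) / ∫ θ', L n ω θ' ^ (α n) * prior θ') *
            Real.exp (Real.log (L n ω (θstar + t⁻¹ • x)) * (α n) +
              Real.log (prior (θstar + t⁻¹ • x))) := by
      intro x hx
      simp only [post]
      conv_lhs => rw [Real.rpow_def_of_pos (hLpos n ω _), ← Real.exp_log (hpriorpos x hx)]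
      rw [Real.exp_add]
      ring
    -- expansion of the Gaussian quadratic form
    have hsym : ∀ i j, V j i = V i j := fun i j => hVs.apply i j
    have hS : ∀ x : EuclideanSpace ℝ (Fin p),
        ∑ i, ∑ j, (x i - t * (θhat n ω i - θstar i)) * V i j *
            (x j - t * (θhat n ω j - θstar j))
          = (∑ i, ∑ j, x i * V i j * x j)
            - 2 * (Real.sqrt (α n) * ∑ i, ∑ j, x i * V i j *
                (Real.sqrt (n : ℝ) * (θhat n ω j - θstar j)))
            + ∑ i, ∑ j, (t * (θhat n ω i - θstar i)) * V i j *
                (t * (θhat n ω j - θstar j)) := by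
      intro x
      have hmid : Real.sqrt (α n) * ∑ i, ∑ j, x i * V i j *
            (Real.sqrt (n : ℝ) * (θhat n ω j - θstar j))
          = ∑ i, ∑ j, x i * V i j * (t * (θhat n ω j - θstar j)) := by
        rw [htsplit]
        simp_rw [Finset.mul_sum]
        exact Finset.sum_congr rfl fun i _ => Finset.sum_congr rfl fun j _ => by ring
      have hterm : ∀ i j : Fin p,
          (x i - t * (θhat n ω i - θstar i)) * V i j * (x j - t * (θhat n ω j - θstar j))
            = x i * V i j * x j - x i * V i j * (t * (θhat n ω j - θstar j))
              - (t * (θhat n ω i - θstar i)) * V i j * x j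
              + (t * (θhat n ω i - θstar i)) * V i j * (t * (θhat n ω j - θstar j)) :=
        fun i j => by ring
      have hswap : ∑ i, ∑ j, (t * (θhat n ω i - θstar i)) * V i j * x j
          = ∑ i, ∑ j, x i * V i j * (t * (θhat n ω j - θstar j)) := by
        rw [Finset.sum_comm]
        exact Finset.sum_congr rfl fun i _ => Finset.sum_congr rfl fun j _ => by
          rw [hsym i j]; ring
      simp_rw [hterm]
      simp only [Finset.sum_add_distrib, Finset.sum_sub_distrib]
      rw [hswap, ← hmid]
      ring
    -- conclude
    refine absurd hgt (not_lt.mpr (max_le hη.le ?_))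
    rw [hPhi h, hPhi g, hApost g hg, hApost h hh,
      ratio_exp_aux _ _ (ne_of_gt hc2) (ne_of_gt hKpos)]
    have hlin : -(2 * s) ≤
        -(1 / 2) * (∑ i, ∑ j, (h i - t * (θhat n ω i - θstar i)) * V i j *
            (h j - t * (θhat n ω j - θstar j)))
          + (Real.log (L n ω (θstar + t⁻¹ • g)) * (α n) +
              Real.log (prior (θstar + t⁻¹ • g)))
          - ((Real.log (L n ω (θstar + t⁻¹ • h)) * (α n) +
              Real.log (prior (θstar + t⁻¹ • h)))
            + -(1 / 2) * (∑ i, ∑ j, (g i - t * (θhat n ω i - θstar i)) * V i j *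
                (g j - t * (θhat n ω j - θstar j)))) := by
      have e1 := abs_le.mp hρg
      have e2 := abs_le.mp hρh
      have e3 := abs_lt.mp (hlogprior g hg)
      have e4 := abs_lt.mp (hlogprior h hh)
      have hSg := hS g
      have hSh := hS h
      linarith [e1.1, e1.2, e2.1, e2.2, e3.1.le, e3.2.le, e4.1.le, e4.2.le, hSg, hSh]
    have hmono := Real.exp_le_exp.mpr hlin
    rw [hexp2s] at hmono
    linarith
end
end

section
/- Lemma C.1 (Wasserstein distance bounded via total variation and moments). Let (X,d) be a Polish metric space, fix reals s ≥ 1 and m > s, a point x₀ ∈ X, and Borel probability measures μ, ν on X with ∫ d(x,x₀)^m dμ(x) < ∞ and ∫ d(y,x₀)^m dν(y) < ∞. Set δ := d_TV(μ,ν) and M_m := ∫ d(x,x₀)^m dμ(x) + ∫ d(y,x₀)^m dν(y). Then there exists a coupling γ of (μ,ν) such that (∫_{X×X} d(x,y)^s dγ(x,y))^{1/s} ≤ 2^{1+1/s}·M_m^{1/m}·δ^{1/s − 1/m}; in particular, d_{W_s}(μ,ν) ≤ 2^{1+1/s}·M_m^{1/m}·δ^{1/s − 1/m}. -/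
open MeasureTheory Filter BigOperators

noncomputable section

section AuxLemC1

open scoped ENNReal

variable {X : Type} [MeasurableSpace X]

lemma wassersteinAux_nonneg [PseudoMetricSpace X] (s : ℝ) (μ ν : Measure X) :
    ∀ c ∈ {c : ℝ | ∃ γ : Measure (X × X), IsCoupling μ ν γ ∧
      c = (∫ x : X × X, dist x.1 x.2 ^ s ∂γ) ^ (1 / s)}, 0 ≤ c := by
  rintro c ⟨γ, _, rfl⟩
  exact Real.rpow_nonneg (integral_nonneg fun p => Real.rpow_nonneg dist_nonneg _) _

lemma wassersteinDist_le_of_coupling [PseudoMetricSpace X]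
    (s : ℝ) (μ ν : Measure X) (γ : Measure (X × X)) (h : IsCoupling μ ν γ) :
    wassersteinDist s μ ν ≤ (∫ x : X × X, dist x.1 x.2 ^ s ∂γ) ^ (1 / s) :=
  csInf_le ⟨0, wassersteinAux_nonneg s μ ν⟩ ⟨γ, h, rfl⟩

lemma abs_le_tvDist (μ ν : Measure X) [IsProbabilityMeasure μ] [IsProbabilityMeasure ν]
    {A : Set X} (hA : MeasurableSet A) :
    |(μ A).toReal - (ν A).toReal| ≤ tvDist μ ν := by
  apply le_csSup
  · refine ⟨1, ?_⟩
    rintro x ⟨B, hB, rfl⟩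
    have h1 : (μ B).toReal ≤ 1 := by
      calc (μ B).toReal ≤ (μ Set.univ).toReal :=
            ENNReal.toReal_mono (measure_ne_top μ _) (measure_mono (Set.subset_univ _))
        _ = 1 := by simp
    have h2 : (ν B).toReal ≤ 1 := by
      calc (ν B).toReal ≤ (ν Set.univ).toReal :=
            ENNReal.toReal_mono (measure_ne_top ν _) (measure_mono (Set.subset_univ _))
        _ = 1 := by simp
    have h3 : 0 ≤ (μ B).toReal := ENNReal.toReal_nonneg
    have h4 : 0 ≤ (ν B).toReal := ENNReal.toReal_nonneg
    rw [abs_sub_le_iff]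
    constructor <;> linarith
  · exact ⟨A, hA, rfl⟩

lemma tvDist_nonneg' (μ ν : Measure X) [IsProbabilityMeasure μ] [IsProbabilityMeasure ν] :
    0 ≤ tvDist μ ν := by
  have h := abs_le_tvDist μ ν MeasurableSet.empty
  simpa using h

lemma lintegral_rpow_le_holder (ρ : Measure X) (u : X → ℝ≥0∞) (hu : Measurable u)
    {s m : ℝ} (hs : 0 < s) (hsm : s < m) :
    ∫⁻ x, (u x) ^ (s / m) ∂ρ ≤ (∫⁻ x, u x ∂ρ) ^ (s / m) * (ρ Set.univ) ^ (1 - s / m) := by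
  have hm : 0 < m := hs.trans hsm
  have hsm1 : s / m < 1 := (div_lt_one hm).mpr hsm
  have hsm0 : 0 < s / m := div_pos hs hm
  have hpq : (m / s).HolderConjugate (1 - s / m)⁻¹ := by
    rw [Real.holderConjugate_iff]
    constructor
    · rw [lt_div_iff₀ hs]; linarith
    · rw [inv_div, inv_inv]; ring
  have key := ENNReal.lintegral_mul_le_Lp_mul_Lq ρ hpq
      (f := fun x => u x ^ (s / m)) (g := fun _ => 1)
      (ENNReal.continuous_rpow_const.measurable.comp hu).aemeasurable
      aemeasurable_const
  have e1 : ∀ x, (u x ^ (s / m) * 1) = u x ^ (s / m) := fun x => mul_one _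
  have e2 : ∀ x : X, (u x ^ (s / m)) ^ (m / s) = u x := by
    intro x
    rw [← ENNReal.rpow_mul]
    rw [show s / m * (m / s) = 1 by field_simp]
    exact ENNReal.rpow_one _
  simp only [Pi.mul_apply, Pi.one_apply, mul_one, e2, ENNReal.one_rpow] at key
  rw [lintegral_one] at key
  rw [show 1 / (m / s) = s / m by rw [one_div, inv_div],
      show 1 / (1 - s / m)⁻¹ = 1 - s / m by rw [one_div, inv_inv]] at key
  exact key

end AuxLemC1


set_option maxHeartbeats 400000 in
/-- **Lemma C.1** (Wasserstein distance bounded via total variation and moments). -/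
theorem wasserstein_bounded_by_tv_and_moments
    {X : Type} [MetricSpace X] [PolishSpace X] [MeasurableSpace X] [BorelSpace X]
    (s m : ℝ) (hs : 1 ≤ s) (hm : s < m) (x₀ : X)
    (μ ν : Measure X) [IsProbabilityMeasure μ] [IsProbabilityMeasure ν]
    (hμmom : Integrable (fun x => dist x x₀ ^ m) μ)
    (hνmom : Integrable (fun y => dist y x₀ ^ m) ν) :
    (∃ γ : Measure (X × X), IsCoupling μ ν γ ∧
      (∫ x : X × X, dist x.1 x.2 ^ s ∂γ) ^ (1 / s) ≤
        (2 : ℝ) ^ (1 + 1 / s) *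
          ((∫ x, dist x x₀ ^ m ∂μ) + ∫ y, dist y x₀ ^ m ∂ν) ^ (1 / m) *
          tvDist μ ν ^ (1 / s - 1 / m)) ∧
    wassersteinDist s μ ν ≤
      (2 : ℝ) ^ (1 + 1 / s) *
        ((∫ x, dist x x₀ ^ m ∂μ) + ∫ y, dist y x₀ ^ m ∂ν) ^ (1 / m) *
        tvDist μ ν ^ (1 / s - 1 / m) := by
    -- basic positivity facts
  have hs0 : (0:ℝ) < s := lt_of_lt_of_le one_pos hs
  have hm0 : (0:ℝ) < m := hs0.trans hm
  have hMμ : 0 ≤ ∫ x, dist x x₀ ^ m ∂μ := integral_nonneg fun x => Real.rpow_nonneg dist_nonneg m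
  have hMν : 0 ≤ ∫ y, dist y x₀ ^ m ∂ν := integral_nonneg fun y => Real.rpow_nonneg dist_nonneg m
  set M : ℝ := (∫ x, dist x x₀ ^ m ∂μ) + ∫ y, dist y x₀ ^ m ∂ν with hMdef
  have hM0 : 0 ≤ M := add_nonneg hMμ hMν
  have hδ0 : 0 ≤ tvDist μ ν := tvDist_nonneg' μ ν
  have he : 0 ≤ 1/s - 1/m := by
    rw [sub_nonneg]
    exact div_le_div_of_nonneg_left one_pos.le hs0 hm.le |>.trans le_rfl
  have hRHS : 0 ≤ (2:ℝ) ^ (1 + 1/s) * M ^ (1/m) * tvDist μ ν ^ (1/s - 1/m) :=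
    mul_nonneg (mul_nonneg (Real.rpow_nonneg (by norm_num) _) (Real.rpow_nonneg hM0 _))
      (Real.rpow_nonneg hδ0 _)
  have hFcont : Continuous fun p : X × X => dist p.1 p.2 ^ s :=
    continuous_dist.rpow_const fun p => Or.inr hs0.le
  have hdiag : Measurable fun x : X => (x, x) := measurable_id.prodMk measurable_id
  -- decomposition
  set ρ : Measure X := μ + ν with hρdef
  have hμρ : μ ≪ ρ := Measure.absolutelyContinuous_of_le (Measure.le_add_right le_rfl)
  have hνρ : ν ≪ ρ := Measure.absolutelyContinuous_of_le (Measure.le_add_left le_rfl)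
  set f := μ.rnDeriv ρ with hfdef
  set g := ν.rnDeriv ρ with hgdef
  have hf : Measurable f := Measure.measurable_rnDeriv μ ρ
  have hg : Measurable g := Measure.measurable_rnDeriv ν ρ
  have hfρ : ρ.withDensity f = μ := Measure.withDensity_rnDeriv_eq μ ρ hμρ
  have hgρ : ρ.withDensity g = ν := Measure.withDensity_rnDeriv_eq ν ρ hνρ
  have hhm : Measurable fun x => min (f x) (g x) := hf.min hg
  set lam := ρ.withDensity (fun x => min (f x) (g x)) with hlamdef
  set μ' := ρ.withDensity (fun x => f x - min (f x) (g x)) with hμ'def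
  set ν' := ρ.withDensity (fun x => g x - min (f x) (g x)) with hν'def
  have hμsplit : lam + μ' = μ := by
    rw [hlamdef, hμ'def, ← withDensity_add_left hhm, ← hfρ]
    congr 1
    funext x
    simp only [Pi.add_apply]
    exact add_tsub_cancel_of_le (min_le_left _ _)
  have hνsplit : lam + ν' = ν := by
    rw [hlamdef, hν'def, ← withDensity_add_left hhm, ← hgρ]
    congr 1
    funext x
    simp only [Pi.add_apply]
    exact add_tsub_cancel_of_le (min_le_right _ _)
  have hμ'le : μ' ≤ μ := by rw [← hμsplit]; exact Measure.le_add_left le_rfl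
  have hν'le : ν' ≤ ν := by rw [← hνsplit]; exact Measure.le_add_left le_rfl
  haveI : IsFiniteMeasure μ' := isFiniteMeasure_of_le μ hμ'le
  haveI : IsFiniteMeasure ν' := isFiniteMeasure_of_le ν hν'le
  set δ' : ENNReal := μ' Set.univ with hδ'def
  have hμuniv : lam Set.univ + μ' Set.univ = 1 := by
    rw [← Measure.add_apply, hμsplit, measure_univ]
  have hνuniv : lam Set.univ + ν' Set.univ = 1 := by
    rw [← Measure.add_apply, hνsplit, measure_univ]
  have hlamtop : lam Set.univ ≠ ⊤ := by
    intro hcontra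
    rw [hcontra] at hμuniv
    simp at hμuniv
  have hν'univ : ν' Set.univ = δ' := by
    have h := hμuniv.trans hνuniv.symm
    exact ((ENNReal.add_right_inj hlamtop).mp h).symm
  have hδ'top : δ' ≠ ⊤ := measure_ne_top μ' _
  -- δ'.toReal ≤ tvDist μ ν
  set A : Set X := {x | g x < f x} with hAdef
  have hAmeas : MeasurableSet A := measurableSet_lt hg hf
  have hlamA : lam A = ν A := by
    rw [hlamdef, withDensity_apply _ hAmeas, ← hgρ, withDensity_apply _ hAmeas]
    apply setLIntegral_congr_fun hAmeas
    exact fun x hx => min_eq_right (le_of_lt hx)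
  have hμ'Ac : μ' Aᶜ = 0 := by
    rw [hμ'def, withDensity_apply _ hAmeas.compl]
    have : ∀ x ∈ Aᶜ, f x - min (f x) (g x) = (0 : ENNReal) := by
      intro x hx
      have hfx : f x ≤ g x := not_lt.mp hx
      rw [min_eq_left hfx, tsub_self]
    rw [setLIntegral_congr_fun hAmeas.compl this]
    simp
  have hμ'A : μ' A = δ' := by
    have h := measure_add_measure_compl (μ := μ') hAmeas
    rw [hμ'Ac, add_zero] at h
    rw [h]
  have hμA : μ A = ν A + δ' := by
    rw [← hμsplit, Measure.add_apply, hlamA, hμ'A]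
  have hδrle : δ'.toReal ≤ tvDist μ ν := by
    have h1 := abs_le_tvDist μ ν hAmeas
    have heq : (μ A).toReal = (ν A).toReal + δ'.toReal := by
      rw [hμA, ENNReal.toReal_add (measure_ne_top ν A) hδ'top]
    rw [heq, add_sub_cancel_left, abs_of_nonneg ENNReal.toReal_nonneg] at h1
    exact h1
  by_cases hδ'0 : δ' = 0
  · -- μ = ν : use the diagonal coupling
    have hμ'0 : μ' = 0 := Measure.measure_univ_eq_zero.mp hδ'0
    have hν'0 : ν' = 0 := Measure.measure_univ_eq_zero.mp (hν'univ.trans hδ'0)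
    have hμν : μ = ν := by rw [← hμsplit, ← hνsplit, hμ'0, hν'0]
    set γ : Measure (X × X) := μ.map (fun x => (x, x)) with hγdef
    haveI : IsProbabilityMeasure γ := Measure.isProbabilityMeasure_map hdiag.aemeasurable
    have hfst : γ.map Prod.fst = μ := by
      rw [hγdef, Measure.map_map measurable_fst hdiag]
      have : (Prod.fst ∘ fun x : X => (x, x)) = id := rfl
      rw [this, Measure.map_id]
    have hsnd : γ.map Prod.snd = ν := by
      rw [hγdef, Measure.map_map measurable_snd hdiag]
      have : (Prod.snd ∘ fun x : X => (x, x)) = id := rfl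
      rw [this, Measure.map_id, hμν]
    have hcoupling : IsCoupling μ ν γ := ⟨inferInstance, hfst, hsnd⟩
    have hint : (∫ x : X × X, dist x.1 x.2 ^ s ∂γ) = 0 := by
      rw [hγdef, integral_map hdiag.aemeasurable hFcont.aestronglyMeasurable]
      simp [dist_self, Real.zero_rpow (ne_of_gt hs0)]
    have hbound : (∫ x : X × X, dist x.1 x.2 ^ s ∂γ) ^ (1/s) ≤
        (2:ℝ) ^ (1 + 1/s) * M ^ (1/m) * tvDist μ ν ^ (1/s - 1/m) := by
      rw [hint, Real.zero_rpow (one_div_ne_zero (ne_of_gt hs0))]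
      exact hRHS
    exact ⟨⟨γ, hcoupling, hbound⟩,
      le_trans (wassersteinDist_le_of_coupling s μ ν γ hcoupling) hbound⟩
  · -- main case
    have hinv : δ'⁻¹ * δ' = 1 := ENNReal.inv_mul_cancel hδ'0 hδ'top
    set π := μ'.prod ν' with hπdef
    set γ : Measure (X × X) := lam.map (fun x => (x, x)) + δ'⁻¹ • π with hγdef
    have hπfst : π.map Prod.fst = δ' • μ' := by
      rw [hπdef, Measure.map_fst_prod, hν'univ]
    have hπsnd : π.map Prod.snd = δ' • ν' := by
      rw [hπdef, Measure.map_snd_prod, ← hδ'def]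
    have hfst : γ.map Prod.fst = μ := by
      rw [hγdef, Measure.map_add _ _ measurable_fst, Measure.map_smul,
        Measure.map_map measurable_fst hdiag, hπfst, smul_smul, hinv, one_smul]
      have : (Prod.fst ∘ fun x : X => (x, x)) = id := rfl
      rw [this, Measure.map_id, hμsplit]
    have hsnd : γ.map Prod.snd = ν := by
      rw [hγdef, Measure.map_add _ _ measurable_snd, Measure.map_smul,
        Measure.map_map measurable_snd hdiag, hπsnd, smul_smul, hinv, one_smul]
      have : (Prod.snd ∘ fun x : X => (x, x)) = id := rfl
      rw [this, Measure.map_id, hνsplit]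
    have hπuniv : π Set.univ = δ' * δ' := by
      rw [hπdef, ← Set.univ_prod_univ, Measure.prod_prod, hν'univ, ← hδ'def]
    haveI hγprob : IsProbabilityMeasure γ := by
      constructor
      rw [hγdef, Measure.add_apply, Measure.smul_apply, smul_eq_mul,
        Measure.map_apply hdiag MeasurableSet.univ, Set.preimage_univ, hπuniv,
        ← mul_assoc, hinv, one_mul]
      exact hμuniv
    have hcoupling : IsCoupling μ ν γ := ⟨hγprob, hfst, hsnd⟩
    -- the integral bound
    set a : X → ENNReal := fun x => ENNReal.ofReal (dist x x₀ ^ m) with hadef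
    have hacont : Continuous fun x : X => dist x x₀ ^ m :=
      (continuous_id.dist continuous_const).rpow_const fun x => Or.inr hm0.le
    have hameas : Measurable a := hacont.measurable.ennreal_ofReal
    set G : X → ENNReal := fun x => a x ^ (s/m) with hGdef
    have hGmeas : Measurable G := ENNReal.continuous_rpow_const.measurable.comp hameas
    set F : X × X → ENNReal := fun p => ENNReal.ofReal (dist p.1 p.2 ^ s) with hFdef
    have hFmeas : Measurable F := hFcont.measurable.ennreal_ofReal
    have hsm0 : (0:ℝ) ≤ s/m := le_of_lt (div_pos hs0 hm0)
    have haG : ∀ x : X, G x = ENNReal.ofReal (dist x x₀ ^ s) := by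
      intro x
      rw [hGdef]
      simp only
      rw [hadef]
      simp only
      rw [ENNReal.ofReal_rpow_of_nonneg (Real.rpow_nonneg dist_nonneg m) hsm0,
        ← Real.rpow_mul dist_nonneg]
      congr 1
      field_simp
    have hpt : ∀ p : X × X, F p ≤ ENNReal.ofReal (2 ^ s) * (G p.1 + G p.2) := by
      intro p
      have h1 : dist p.1 p.2 ≤ dist p.1 x₀ + dist p.2 x₀ := dist_triangle_right _ _ _
      have hD : (0:ℝ) ≤ max (dist p.1 x₀) (dist p.2 x₀) :=
        le_trans dist_nonneg (le_max_left _ _)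
      have h2 : dist p.1 p.2 ≤ 2 * max (dist p.1 x₀) (dist p.2 x₀) := by
        have := add_le_add (le_max_left (dist p.1 x₀) (dist p.2 x₀))
          (le_max_right (dist p.1 x₀) (dist p.2 x₀))
        linarith
      have h3 : dist p.1 p.2 ^ s ≤ (2 * max (dist p.1 x₀) (dist p.2 x₀)) ^ s :=
        Real.rpow_le_rpow dist_nonneg h2 hs0.le
      have h4 : (2 * max (dist p.1 x₀) (dist p.2 x₀)) ^ s
          = 2 ^ s * max (dist p.1 x₀) (dist p.2 x₀) ^ s :=
        Real.mul_rpow (by norm_num) hD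
      have h5 : max (dist p.1 x₀) (dist p.2 x₀) ^ s ≤ dist p.1 x₀ ^ s + dist p.2 x₀ ^ s := by
        rcases le_total (dist p.1 x₀) (dist p.2 x₀) with h | h
        · rw [max_eq_right h]
          exact le_add_of_nonneg_left (Real.rpow_nonneg dist_nonneg s)
        · rw [max_eq_left h]
          exact le_add_of_nonneg_right (Real.rpow_nonneg dist_nonneg s)
      have h2s : (0:ℝ) ≤ 2 ^ s := Real.rpow_nonneg (by norm_num) s
      have key : dist p.1 p.2 ^ s ≤ 2 ^ s * (dist p.1 x₀ ^ s + dist p.2 x₀ ^ s) := by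
        calc dist p.1 p.2 ^ s ≤ 2 ^ s * max (dist p.1 x₀) (dist p.2 x₀) ^ s := h4 ▸ h3
          _ ≤ 2 ^ s * (dist p.1 x₀ ^ s + dist p.2 x₀ ^ s) := by
              exact mul_le_mul_of_nonneg_left h5 h2s
      calc F p ≤ ENNReal.ofReal (2 ^ s * (dist p.1 x₀ ^ s + dist p.2 x₀ ^ s)) :=
            ENNReal.ofReal_le_ofReal key
        _ = ENNReal.ofReal (2 ^ s) * (G p.1 + G p.2) := by
            rw [ENNReal.ofReal_mul h2s,
              ENNReal.ofReal_add (Real.rpow_nonneg dist_nonneg s)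
                (Real.rpow_nonneg dist_nonneg s), haG p.1, haG p.2]
    -- Hölder bounds
    have hlint_a_mu : ∫⁻ x, a x ∂μ' ≤ ENNReal.ofReal M := by
      calc ∫⁻ x, a x ∂μ' ≤ ∫⁻ x, a x ∂μ := lintegral_mono' hμ'le le_rfl
        _ = ENNReal.ofReal (∫ x, dist x x₀ ^ m ∂μ) :=
            (ofReal_integral_eq_lintegral_ofReal hμmom
              (Filter.Eventually.of_forall fun x => Real.rpow_nonneg dist_nonneg m)).symm
        _ ≤ ENNReal.ofReal M := ENNReal.ofReal_le_ofReal (by rw [hMdef]; linarith)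
    have hlint_a_nu : ∫⁻ y, a y ∂ν' ≤ ENNReal.ofReal M := by
      calc ∫⁻ y, a y ∂ν' ≤ ∫⁻ y, a y ∂ν := lintegral_mono' hν'le le_rfl
        _ = ENNReal.ofReal (∫ y, dist y x₀ ^ m ∂ν) :=
            (ofReal_integral_eq_lintegral_ofReal hνmom
              (Filter.Eventually.of_forall fun y => Real.rpow_nonneg dist_nonneg m)).symm
        _ ≤ ENNReal.ofReal M := ENNReal.ofReal_le_ofReal (by rw [hMdef]; linarith)
    set K : ENNReal := (ENNReal.ofReal M) ^ (s/m) * δ' ^ (1 - s/m) with hKdef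
    have hsm1 : (0:ℝ) ≤ 1 - s/m := by
      have : s/m < 1 := (div_lt_one hm0).mpr hm
      linarith
    have hIμ : ∫⁻ x, G x ∂μ' ≤ K := by
      calc ∫⁻ x, G x ∂μ' ≤ (∫⁻ x, a x ∂μ') ^ (s/m) * (μ' Set.univ) ^ (1 - s/m) :=
            lintegral_rpow_le_holder μ' a hameas hs0 hm
        _ ≤ K := by
            rw [hKdef, ← hδ'def]
            exact mul_le_mul' (ENNReal.rpow_le_rpow hlint_a_mu hsm0) le_rfl
    have hIν : ∫⁻ y, G y ∂ν' ≤ K := by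
      calc ∫⁻ y, G y ∂ν' ≤ (∫⁻ y, a y ∂ν') ^ (s/m) * (ν' Set.univ) ^ (1 - s/m) :=
            lintegral_rpow_le_holder ν' a hameas hs0 hm
        _ ≤ K := by
            rw [hKdef, hν'univ]
            exact mul_le_mul' (ENNReal.rpow_le_rpow hlint_a_nu hsm0) le_rfl
    have hπint : ∫⁻ p, F p ∂π ≤ ENNReal.ofReal (2 ^ s) * (δ' * (K + K)) := by
      calc ∫⁻ p, F p ∂π ≤ ∫⁻ p, ENNReal.ofReal (2 ^ s) * (G p.1 + G p.2) ∂π :=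
            lintegral_mono hpt
        _ = ENNReal.ofReal (2 ^ s) * ∫⁻ p, (G p.1 + G p.2) ∂π := by
            have hG1 : Measurable fun p : X × X => G p.1 := hGmeas.comp measurable_fst
            have hG2 : Measurable fun p : X × X => G p.2 := hGmeas.comp measurable_snd
            rw [lintegral_const_mul _ (by fun_prop : Measurable fun p : X × X => G p.1 + G p.2)]
        _ = ENNReal.ofReal (2 ^ s) * ((∫⁻ p : X × X, G p.1 ∂π) + ∫⁻ p : X × X, G p.2 ∂π) := by
            have hG1 : Measurable fun p : X × X => G p.1 := hGmeas.comp measurable_fst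
            rw [lintegral_add_left hG1]
        _ = ENNReal.ofReal (2 ^ s) * (δ' * ∫⁻ x, G x ∂μ' + δ' * ∫⁻ y, G y ∂ν') := by
            congr 1
            congr 1
            · rw [← lintegral_map hGmeas measurable_fst, hπfst, lintegral_smul_measure, smul_eq_mul]
            · rw [← lintegral_map hGmeas measurable_snd, hπsnd, lintegral_smul_measure, smul_eq_mul]
        _ ≤ ENNReal.ofReal (2 ^ s) * (δ' * (K + K)) := by
            rw [mul_add δ']
            exact mul_le_mul' le_rfl (add_le_add (mul_le_mul' le_rfl hIμ)
              (mul_le_mul' le_rfl hIν))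
    have hIγ : ∫⁻ p, F p ∂γ ≤ ENNReal.ofReal (2 ^ s) * (K + K) := by
      rw [hγdef, lintegral_add_measure, lintegral_smul_measure]
      have hdiagzero : ∫⁻ p, F p ∂(lam.map fun x => (x, x)) = 0 := by
        rw [lintegral_map hFmeas hdiag]
        simp only [hFdef]
        simp [dist_self, Real.zero_rpow (ne_of_gt hs0)]
      rw [hdiagzero, zero_add]
      calc δ'⁻¹ * ∫⁻ p, F p ∂π ≤ δ'⁻¹ * (ENNReal.ofReal (2 ^ s) * (δ' * (K + K))) :=
            mul_le_mul' le_rfl hπint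
        _ = (δ'⁻¹ * δ') * (ENNReal.ofReal (2 ^ s) * (K + K)) := by ring
        _ = ENNReal.ofReal (2 ^ s) * (K + K) := by rw [hinv, one_mul]
    -- convert to real
    set δr : ℝ := δ'.toReal with hδrdef
    have hδr0 : 0 ≤ δr := ENNReal.toReal_nonneg
    set C : ℝ := 2 ^ s * (2 * (M ^ (s/m) * δr ^ (1 - s/m))) with hCdef
    have hC0 : 0 ≤ C := by
      apply mul_nonneg (Real.rpow_nonneg (by norm_num) s)
      apply mul_nonneg (by norm_num)
      exact mul_nonneg (Real.rpow_nonneg hM0 _) (Real.rpow_nonneg hδr0 _)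
    have hofC : ENNReal.ofReal (2 ^ s) * (K + K) = ENNReal.ofReal C := by
      rw [hCdef, ENNReal.ofReal_mul (Real.rpow_nonneg (by norm_num) s)]
      congr 1
      rw [ENNReal.ofReal_mul (by norm_num : (0:ℝ) ≤ 2)]
      rw [ENNReal.ofReal_mul (Real.rpow_nonneg hM0 _)]
      rw [← ENNReal.ofReal_rpow_of_nonneg hM0 hsm0,
        ← ENNReal.ofReal_rpow_of_nonneg hδr0 hsm1, hδrdef, ENNReal.ofReal_toReal hδ'top]
      rw [ENNReal.ofReal_ofNat, two_mul]
    have hintreal : (∫ p : X × X, dist p.1 p.2 ^ s ∂γ) ≤ C := by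
      rw [integral_eq_lintegral_of_nonneg_ae
        (Filter.Eventually.of_forall fun p => Real.rpow_nonneg dist_nonneg s)
        hFcont.aestronglyMeasurable]
      apply ENNReal.toReal_le_of_le_ofReal hC0
      rw [← hofC]
      exact hIγ
    have hint0 : 0 ≤ ∫ p : X × X, dist p.1 p.2 ^ s ∂γ :=
      integral_nonneg fun p => Real.rpow_nonneg dist_nonneg s
    -- real algebra
    have hsne : s ≠ 0 := ne_of_gt hs0
    have hmne : m ≠ 0 := ne_of_gt hm0
    have e1 : ((2:ℝ) ^ s) ^ (1/s) = 2 := by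
      rw [← Real.rpow_mul (by norm_num : (0:ℝ) ≤ 2), mul_one_div, div_self (ne_of_gt hs0),
        Real.rpow_one]
    have e2 : (M ^ (s/m)) ^ (1/s) = M ^ (1/m) := by
      rw [← Real.rpow_mul hM0, show s/m * (1/s) = 1/m by rw [div_mul_div_comm, mul_one, mul_comm m s, ← div_div, div_self hsne]]
    have e3 : (δr ^ (1 - s/m)) ^ (1/s) = δr ^ (1/s - 1/m) := by
      rw [← Real.rpow_mul hδr0, show (1 - s/m) * (1/s) = 1/s - 1/m by rw [sub_mul, one_mul, div_mul_div_comm, mul_one, mul_comm m s, ← div_div, div_self hsne]]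
    have hCpow : C ^ (1/s) = 2 * ((2:ℝ) ^ (1/s) * (M ^ (1/m) * δr ^ (1/s - 1/m))) := by
      rw [hCdef,
        Real.mul_rpow (Real.rpow_nonneg (by norm_num) s)
          (mul_nonneg (by norm_num)
            (mul_nonneg (Real.rpow_nonneg hM0 _) (Real.rpow_nonneg hδr0 _))),
        Real.mul_rpow (by norm_num : (0:ℝ) ≤ 2)
          (mul_nonneg (Real.rpow_nonneg hM0 _) (Real.rpow_nonneg hδr0 _)),
        Real.mul_rpow (Real.rpow_nonneg hM0 _) (Real.rpow_nonneg hδr0 _),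
        e1, e2, e3]
    have hbound : (∫ p : X × X, dist p.1 p.2 ^ s ∂γ) ^ (1/s) ≤
        (2:ℝ) ^ (1 + 1/s) * M ^ (1/m) * tvDist μ ν ^ (1/s - 1/m) := by
      calc (∫ p : X × X, dist p.1 p.2 ^ s ∂γ) ^ (1/s) ≤ C ^ (1/s) :=
            Real.rpow_le_rpow hint0 hintreal (by positivity)
        _ = 2 * ((2:ℝ) ^ (1/s) * (M ^ (1/m) * δr ^ (1/s - 1/m))) := hCpow
        _ ≤ 2 * ((2:ℝ) ^ (1/s) * (M ^ (1/m) * tvDist μ ν ^ (1/s - 1/m))) := by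
            have hle : δr ^ (1/s - 1/m) ≤ tvDist μ ν ^ (1/s - 1/m) :=
              Real.rpow_le_rpow hδr0 hδrle he
            have h2p : (0:ℝ) ≤ (2:ℝ) ^ (1/s) := Real.rpow_nonneg (by norm_num) _
            have hMp : (0:ℝ) ≤ M ^ (1/m) := Real.rpow_nonneg hM0 _
            nlinarith [mul_nonneg h2p hMp]
        _ = (2:ℝ) ^ (1 + 1/s) * M ^ (1/m) * tvDist μ ν ^ (1/s - 1/m) := by
            rw [Real.rpow_add (by norm_num : (0:ℝ) < 2), Real.rpow_one]
            ring
    exact ⟨⟨γ, hcoupling, hbound⟩,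
      le_trans (wassersteinDist_le_of_coupling s μ ν γ hcoupling) hbound⟩
end
end

section
/- Corollary C.1 (Wasserstein convergence in probability from total-variation convergence plus bounded moments). Let (X,d) be a Polish metric space, fix reals s ≥ 1 and m > s and a point x₀ ∈ X. For each n let (Ω_n, P_n) be a probability space and let μ̂_n, ν̂_n be random Borel probability measures on X defined on Ω_n. If d_TV(μ̂_n, ν̂_n) → 0 in P_n-probability and the sequence M_m(μ̂_n, ν̂_n) := ∫ d(x,x₀)^m dμ̂_n(x) + ∫ d(y,x₀)^m dν̂_n(y) is O_P(1), then d_{W_s}(μ̂_n, ν̂_n) → 0 in P_n-probability, i.e., for every t > 0, P_n( d_{W_s}(μ̂_n, ν̂_n) > t ) → 0. -/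
open MeasureTheory Filter BigOperators

noncomputable section

lemma aux_wd_bddBelow {X : Type} [MeasurableSpace X] [PseudoMetricSpace X]
    (s : ℝ) (μ ν : Measure X) :
    BddBelow {c : ℝ | ∃ γ : Measure (X × X), IsCoupling μ ν γ ∧
      c = (∫ x : X × X, dist x.1 x.2 ^ s ∂γ) ^ (1 / s)} := by
  refine ⟨0, fun c hc => ?_⟩
  obtain ⟨γ, _, rfl⟩ := hc
  exact Real.rpow_nonneg (integral_nonneg fun x => Real.rpow_nonneg dist_nonneg _) _

lemma aux_tv_bddAbove {X : Type} [MeasurableSpace X] (μ ν : Measure X)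
    [IsProbabilityMeasure μ] [IsProbabilityMeasure ν] :
    BddAbove {x : ℝ | ∃ A : Set X, MeasurableSet A ∧
      x = |(μ A).toReal - (ν A).toReal|} := by
  refine ⟨1, fun x hx => ?_⟩
  obtain ⟨A, _, rfl⟩ := hx
  have h1 : (μ A).toReal ≤ 1 := by
    have := measure_mono (Set.subset_univ A) (μ := μ)
    simpa using ENNReal.toReal_mono (by simp) this
  have h2 : (ν A).toReal ≤ 1 := by
    have := measure_mono (Set.subset_univ A) (μ := ν)
    simpa using ENNReal.toReal_mono (by simp) this
  have h3 : 0 ≤ (μ A).toReal := ENNReal.toReal_nonneg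
  have h4 : 0 ≤ (ν A).toReal := ENNReal.toReal_nonneg
  rw [abs_le]; constructor <;> linarith

lemma aux_holder {X : Type} [MetricSpace X] [MeasurableSpace X] [BorelSpace X]
    (ξp : Measure X) [IsFiniteMeasure ξp]
    {s m M : ℝ} (hs : 1 ≤ s) (hm : s < m) (x₀ : X)
    (e : ENNReal) (hep : ξp Set.univ = e)
    (hmom : ∫⁻ x, ENNReal.ofReal (dist x x₀ ^ m) ∂ξp ≤ ENNReal.ofReal M) :
    ∫⁻ x, ENNReal.ofReal (dist x x₀ ^ s) ∂ξp ≤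
      ENNReal.ofReal M ^ (s / m) * e ^ (1 - s / m) := by
  have hs0 : 0 < s := lt_of_lt_of_le one_pos hs
  have hm0 : 0 < m := lt_trans hs0 hm
  have hpq : (m / s).HolderConjugate (1 - s / m)⁻¹ := by
    rw [Real.holderConjugate_iff]
    constructor
    · exact (one_lt_div hs0).2 hm
    · rw [inv_inv, inv_div]
      ring
  have hG : Measurable fun x : X => ENNReal.ofReal (dist x x₀ ^ s) := by
    apply ENNReal.measurable_ofReal.comp
    exact ((continuous_dist.comp (continuous_id.prodMk continuous_const)).rpow_const
      (fun x => Or.inr hs0.le)).measurable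
  have key := ENNReal.lintegral_mul_le_Lp_mul_Lq ξp hpq hG.aemeasurable
    (aemeasurable_const (b := (1 : ENNReal)))
  simp only [Pi.mul_apply, mul_one, ENNReal.one_rpow, lintegral_one, lintegral_const] at key
  have hrw : ∀ x : X, ENNReal.ofReal (dist x x₀ ^ s) ^ (m / s)
      = ENNReal.ofReal (dist x x₀ ^ m) := by
    intro x
    rw [← ENNReal.ofReal_rpow_of_nonneg dist_nonneg hs0.le, ← ENNReal.rpow_mul,
      ← ENNReal.ofReal_rpow_of_nonneg dist_nonneg hm0.le]
    congr 1
    field_simp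
  simp only [hrw, hep] at key
  refine le_trans key ?_
  have h1 : 1 / (m / s) = s / m := by rw [one_div, inv_div]
  have h2 : 1 / (1 - s / m)⁻¹ = 1 - s / m := by rw [one_div, inv_inv]
  rw [h1, h2]
  gcongr

lemma aux_prod_cost {X : Type} [MetricSpace X] [MeasurableSpace X] [BorelSpace X]
    [SecondCountableTopology X]
    (ξp ξm : Measure X) [IsFiniteMeasure ξp] [IsFiniteMeasure ξm]
    {s : ℝ} (hs : 1 ≤ s) (x₀ : X)
    (e : ENNReal) (hep : ξp Set.univ = e) (hem : ξm Set.univ = e) :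
    ∫⁻ z : X × X, ENNReal.ofReal (dist z.1 z.2 ^ s) ∂(ξp.prod ξm) ≤
      ENNReal.ofReal (2 ^ s) *
        (e * ∫⁻ x, ENNReal.ofReal (dist x x₀ ^ s) ∂ξp +
         e * ∫⁻ y, ENNReal.ofReal (dist y x₀ ^ s) ∂ξm) := by
  have hs0 : 0 < s := lt_of_lt_of_le one_pos hs
  have hGc : Continuous fun x : X => dist x x₀ ^ s :=
    (continuous_dist.comp (continuous_id.prodMk continuous_const)).rpow_const
      (fun x => Or.inr hs0.le)
  have hG : Measurable fun x : X => ENNReal.ofReal (dist x x₀ ^ s) :=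
    ENNReal.measurable_ofReal.comp hGc.measurable
  have hpt : ∀ z : X × X, ENNReal.ofReal (dist z.1 z.2 ^ s) ≤
      ENNReal.ofReal (2 ^ s) *
        (ENNReal.ofReal (dist z.1 x₀ ^ s) + ENNReal.ofReal (dist z.2 x₀ ^ s)) := by
    intro z
    rw [← ENNReal.ofReal_add (by positivity) (by positivity), ← ENNReal.ofReal_mul (by positivity)]
    apply ENNReal.ofReal_le_ofReal
    have h1 : dist z.1 z.2 ≤ dist z.1 x₀ + dist z.2 x₀ := by
      rw [dist_comm z.2 x₀]; exact dist_triangle _ _ _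
    have h2 : dist z.1 x₀ + dist z.2 x₀ ≤ 2 * max (dist z.1 x₀) (dist z.2 x₀) := by
      rw [two_mul]
      exact add_le_add (le_max_left _ _) (le_max_right _ _)
    calc dist z.1 z.2 ^ s ≤ (2 * max (dist z.1 x₀) (dist z.2 x₀)) ^ s :=
          Real.rpow_le_rpow dist_nonneg (le_trans h1 h2) hs0.le
      _ = 2 ^ s * max (dist z.1 x₀) (dist z.2 x₀) ^ s := by
          rw [Real.mul_rpow (by norm_num) (le_max_of_le_left dist_nonneg)]
      _ ≤ 2 ^ s * (dist z.1 x₀ ^ s + dist z.2 x₀ ^ s) := by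
          gcongr
          rcases max_cases (dist z.1 x₀) (dist z.2 x₀) with ⟨hmax, _⟩ | ⟨hmax, _⟩ <;>
            rw [hmax]
          · exact le_add_of_nonneg_right (by positivity)
          · exact le_add_of_nonneg_left (by positivity)
  calc ∫⁻ z : X × X, ENNReal.ofReal (dist z.1 z.2 ^ s) ∂(ξp.prod ξm)
      ≤ ∫⁻ z : X × X, ENNReal.ofReal (2 ^ s) *
          (ENNReal.ofReal (dist z.1 x₀ ^ s) + ENNReal.ofReal (dist z.2 x₀ ^ s)) ∂(ξp.prod ξm) :=
        lintegral_mono hpt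
    _ = ENNReal.ofReal (2 ^ s) * ∫⁻ z : X × X,
          (ENNReal.ofReal (dist z.1 x₀ ^ s) + ENNReal.ofReal (dist z.2 x₀ ^ s)) ∂(ξp.prod ξm) :=
        lintegral_const_mul _ ((hG.comp measurable_fst).add (hG.comp measurable_snd))
    _ ≤ ENNReal.ofReal (2 ^ s) *
        (e * ∫⁻ x, ENNReal.ofReal (dist x x₀ ^ s) ∂ξp +
         e * ∫⁻ y, ENNReal.ofReal (dist y x₀ ^ s) ∂ξm) := by
        gcongr
        have hG1 : Measurable fun z : X × X => ENNReal.ofReal (dist z.1 x₀ ^ s) :=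
          hG.comp measurable_fst
        rw [lintegral_add_left hG1]
        apply le_of_eq
        congr 1
        · have hfst := lintegral_map (μ := ξp.prod ξm) hG measurable_fst
          rw [Measure.map_fst_prod, hem, lintegral_smul_measure] at hfst
          exact hfst.symm
        · have hsnd := lintegral_map (μ := ξp.prod ξm) hG measurable_snd
          rw [Measure.map_snd_prod, hep, lintegral_smul_measure] at hsnd
          exact hsnd.symm

lemma aux_det_bound {X : Type} [MetricSpace X] [MeasurableSpace X] [BorelSpace X]
    [SecondCountableTopology X]
    {s m : ℝ} (hs : 1 ≤ s) (hm : s < m) (x₀ : X) {M δ : ℝ} (hM : 0 < M) (hδ : 0 ≤ δ)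
    (μ ν : Measure X) [IsProbabilityMeasure μ] [IsProbabilityMeasure ν]
    (hμm : ∫⁻ x, ENNReal.ofReal (dist x x₀ ^ m) ∂μ ≤ ENNReal.ofReal M)
    (hνm : ∫⁻ y, ENNReal.ofReal (dist y x₀ ^ m) ∂ν ≤ ENNReal.ofReal M)
    (htv : tvDist μ ν ≤ δ) :
    wassersteinDist s μ ν ≤ (2 ^ (s + 1) * M ^ (s / m) * δ ^ (1 - s / m)) ^ (1 / s) := by
  have hs0 : 0 < s := lt_of_lt_of_le one_pos hs
  have hm0 : 0 < m := lt_trans hs0 hm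
  have hsm : 0 ≤ 1 - s / m := by
    have : s / m ≤ 1 := (div_le_one hm0).2 hm.le
    linarith
  have hRHS0 : 0 ≤ (2 ^ (s + 1) * M ^ (s / m) * δ ^ (1 - s / m)) ^ (1 / s) := by positivity
  have hdiag : Measurable fun x : X => (x, x) := measurable_id.prodMk measurable_id
  have hFc : Continuous fun z : X × X => dist z.1 z.2 ^ s :=
    continuous_dist.rpow_const (fun x => Or.inr hs0.le)
  have hF : Measurable fun z : X × X => ENNReal.ofReal (dist z.1 z.2 ^ s) :=
    ENNReal.measurable_ofReal.comp hFc.measurable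
  -- Hahn decomposition and common part
  obtain ⟨E, hE, hE1, hE2⟩ := hahn_decomposition (μ := μ) (ν := ν)
  have hleE : ν.restrict E ≤ μ.restrict E := by
    rw [Measure.le_iff]
    intro t ht
    rw [Measure.restrict_apply ht, Measure.restrict_apply ht]
    exact hE1 _ (ht.inter hE) Set.inter_subset_right
  have hleEc : μ.restrict Eᶜ ≤ ν.restrict Eᶜ := by
    rw [Measure.le_iff]
    intro t ht
    rw [Measure.restrict_apply ht, Measure.restrict_apply ht]
    exact hE2 _ (ht.inter hE.compl) Set.inter_subset_right
  set ξp := μ.restrict E - ν.restrict E with hxp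
  set ξm := ν.restrict Eᶜ - μ.restrict Eᶜ with hxm
  set lam := ν.restrict E + μ.restrict Eᶜ with hlam
  have hμdec : ξp + lam = μ := by
    rw [hlam, ← add_assoc, Measure.sub_add_cancel_of_le hleE,
      Measure.restrict_add_restrict_compl hE]
  have hνdec : ξm + lam = ν := by
    rw [hlam, add_comm (ν.restrict E), ← add_assoc, Measure.sub_add_cancel_of_le hleEc, add_comm,
      Measure.restrict_add_restrict_compl hE]
  have hξpμ : ξp ≤ μ := le_trans Measure.sub_le Measure.restrict_le_self
  have hξmν : ξm ≤ ν := le_trans Measure.sub_le Measure.restrict_le_self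
  set e := ξp Set.univ with he
  have hene : e ≠ ⊤ := measure_ne_top _ _
  have hepE : e = μ E - ν E := by
    rw [he, hxp, Measure.sub_apply MeasurableSet.univ hleE]
    simp [Measure.restrict_apply_univ]
  have hem : ξm Set.univ = e := by
    rw [hxm, Measure.sub_apply MeasurableSet.univ hleEc, hepE]
    simp only [Measure.restrict_apply_univ]
    have h1 : μ E + μ Eᶜ = 1 := by rw [measure_add_measure_compl hE, measure_univ]
    have h2 : ν E + ν Eᶜ = 1 := by rw [measure_add_measure_compl hE, measure_univ]
    have hle : ν E ≤ μ E := hE1 E hE subset_rfl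
    have hle' : μ Eᶜ ≤ ν Eᶜ := hE2 Eᶜ hE.compl subset_rfl
    rw [← ENNReal.toReal_eq_toReal_iff' (by finiteness) (by finiteness),
      ENNReal.toReal_sub_of_le hle (by finiteness),
      ENNReal.toReal_sub_of_le hle' (by finiteness)]
    have e1 : (μ E).toReal + (μ Eᶜ).toReal = 1 := by
      rw [← ENNReal.toReal_add (by finiteness) (by finiteness), h1]; simp
    have e2 : (ν E).toReal + (ν Eᶜ).toReal = 1 := by
      rw [← ENNReal.toReal_add (by finiteness) (by finiteness), h2]; simp
    linarith
  -- e ≤ ofReal δ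
  have heδ : e ≤ ENNReal.ofReal δ := by
    rw [← ENNReal.ofReal_toReal hene]
    apply ENNReal.ofReal_le_ofReal
    have hle : ν E ≤ μ E := hE1 E hE subset_rfl
    have htre : e.toReal = (μ E).toReal - (ν E).toReal := by
      rw [hepE, ENNReal.toReal_sub_of_le hle (by finiteness)]
    have hmem : |(μ E).toReal - (ν E).toReal| ∈
        {x : ℝ | ∃ A : Set X, MeasurableSet A ∧ x = |(μ A).toReal - (ν A).toReal|} :=
      ⟨E, hE, rfl⟩
    have hsup : |(μ E).toReal - (ν E).toReal| ≤ tvDist μ ν :=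
      le_csSup (aux_tv_bddAbove μ ν) hmem
    have habs : (μ E).toReal - (ν E).toReal ≤ |(μ E).toReal - (ν E).toReal| := le_abs_self _
    linarith
  by_cases he0 : e = 0
  · -- μ = ν, use the diagonal coupling
    have hξp0 : ξp = 0 := by
      apply Measure.measure_univ_eq_zero.mp; rw [← he]; exact he0
    have hξm0 : ξm = 0 := by
      apply Measure.measure_univ_eq_zero.mp; rw [hem]; exact he0
    have hμν : μ = ν := by rw [← hμdec, ← hνdec, hξp0, hξm0]
    set γ := μ.map (fun x => (x, x)) with hγ
    have hcoupling : IsCoupling μ ν γ := by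
      refine ⟨Measure.isProbabilityMeasure_map hdiag.aemeasurable, ?_, ?_⟩
      · rw [hγ, Measure.map_map measurable_fst hdiag]; simp [Function.comp_def]
      · rw [hγ, Measure.map_map measurable_snd hdiag, ← hμν]; simp [Function.comp_def]
    have hcost : (∫ z : X × X, dist z.1 z.2 ^ s ∂γ) ^ (1 / s) = 0 := by
      rw [hγ, integral_map hdiag.aemeasurable hFc.aestronglyMeasurable]
      simp [Real.zero_rpow hs0.ne', Real.zero_rpow (inv_ne_zero hs0.ne')]
    refine le_trans (csInf_le (aux_wd_bddBelow s μ ν) ⟨γ, hcoupling, rfl⟩) ?_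
    rw [hcost]
    exact hRHS0
  · -- main coupling
    set γ := lam.map (fun x => (x, x)) + e⁻¹ • ξp.prod ξm with hγ
    have hfstγ : γ.map Prod.fst = μ := by
      rw [hγ, Measure.map_add _ _ measurable_fst, Measure.map_map measurable_fst hdiag,
        Measure.map_smul, Measure.map_fst_prod, hem, smul_smul,
        ENNReal.inv_mul_cancel he0 hene, one_smul]
      simp only [Function.comp_def, Measure.map_id']
      rw [add_comm, hμdec]
    have hsndγ : γ.map Prod.snd = ν := by
      rw [hγ, Measure.map_add _ _ measurable_snd, Measure.map_map measurable_snd hdiag,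
        Measure.map_smul, Measure.map_snd_prod, ← he, smul_smul,
        ENNReal.inv_mul_cancel he0 hene, one_smul]
      simp only [Function.comp_def, Measure.map_id']
      rw [add_comm, hνdec]
    have hγprob : IsProbabilityMeasure γ := by
      constructor
      have : γ.map Prod.fst Set.univ = γ Set.univ := by
        rw [Measure.map_apply measurable_fst MeasurableSet.univ, Set.preimage_univ]
      rw [← this, hfstγ, measure_univ]
    have hcoupling : IsCoupling μ ν γ := ⟨hγprob, hfstγ, hsndγ⟩
    -- bound the cost
    set K := ENNReal.ofReal M ^ (s / m) * (ENNReal.ofReal δ) ^ (1 - s / m) with hK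
    have hA : ∫⁻ x, ENNReal.ofReal (dist x x₀ ^ s) ∂ξp ≤ K := by
      refine le_trans (aux_holder ξp hs hm x₀ e he.symm
        (le_trans (lintegral_mono' hξpμ le_rfl) hμm)) ?_
      rw [hK]
      gcongr
    have hB : ∫⁻ y, ENNReal.ofReal (dist y x₀ ^ s) ∂ξm ≤ K := by
      refine le_trans (aux_holder ξm hs hm x₀ e hem
        (le_trans (lintegral_mono' hξmν le_rfl) hνm)) ?_
      rw [hK]
      gcongr
    have hlint : ∫⁻ z : X × X, ENNReal.ofReal (dist z.1 z.2 ^ s) ∂γ ≤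
        ENNReal.ofReal (2 ^ s) * 2 * K := by
      rw [hγ, lintegral_add_measure, lintegral_smul_measure]
      have hdiag0 : ∫⁻ z : X × X, ENNReal.ofReal (dist z.1 z.2 ^ s) ∂(lam.map fun x => (x, x))
          = 0 := by
        rw [lintegral_map hF hdiag]
        simp [Real.zero_rpow hs0.ne']
      rw [hdiag0, zero_add]
      calc e⁻¹ * ∫⁻ z : X × X, ENNReal.ofReal (dist z.1 z.2 ^ s) ∂(ξp.prod ξm)
          ≤ e⁻¹ * (ENNReal.ofReal (2 ^ s) * (e * K + e * K)) := by
            gcongr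
            refine le_trans (aux_prod_cost ξp ξm hs x₀ e he.symm hem) ?_
            gcongr
        _ = (e⁻¹ * e) * (ENNReal.ofReal (2 ^ s) * 2 * K) := by ring
        _ = ENNReal.ofReal (2 ^ s) * 2 * K := by
            rw [ENNReal.inv_mul_cancel he0 hene, one_mul]
    have hlintR : ∫⁻ z : X × X, ENNReal.ofReal (dist z.1 z.2 ^ s) ∂γ ≤
        ENNReal.ofReal (2 ^ (s + 1) * M ^ (s / m) * δ ^ (1 - s / m)) := by
      refine le_trans hlint (le_of_eq ?_)
      rw [hK, ENNReal.ofReal_mul (by positivity), ENNReal.ofReal_mul (by positivity),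
        ← ENNReal.ofReal_rpow_of_nonneg hM.le (by positivity),
        ← ENNReal.ofReal_rpow_of_nonneg hδ hsm,
        Real.rpow_add two_pos, Real.rpow_one, ENNReal.ofReal_mul (by positivity)]
      norm_num
      ring
    -- convert to the Bochner integral
    have hint : ∫ z : X × X, dist z.1 z.2 ^ s ∂γ =
        (∫⁻ z : X × X, ENNReal.ofReal (dist z.1 z.2 ^ s) ∂γ).toReal := by
      rw [integral_eq_lintegral_of_nonneg_ae
        (Filter.Eventually.of_forall fun z => Real.rpow_nonneg dist_nonneg _)
        hFc.aestronglyMeasurable]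
    have hcost : (∫ z : X × X, dist z.1 z.2 ^ s ∂γ) ^ (1 / s) ≤
        (2 ^ (s + 1) * M ^ (s / m) * δ ^ (1 - s / m)) ^ (1 / s) := by
      apply Real.rpow_le_rpow (by rw [hint]; exact ENNReal.toReal_nonneg) _ (by positivity)
      rw [hint]
      exact ENNReal.toReal_le_of_le_ofReal (by positivity) hlintR
    exact le_trans (csInf_le (aux_wd_bddBelow s μ ν) ⟨γ, hcoupling, rfl⟩) hcost


/-- **Corollary C.1** (Wasserstein convergence in probability from total-variation
convergence plus bounded moments). -/
theorem wasserstein_convergence_from_tv_and_moments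
    {X : Type} [MetricSpace X] [PolishSpace X] [MeasurableSpace X] [BorelSpace X]
    (s m : ℝ) (hs : 1 ≤ s) (hm : s < m) (x₀ : X)
    {Ω : ℕ → Type} [∀ n, MeasurableSpace (Ω n)]
    (P : ∀ n, Measure (Ω n)) [∀ n, IsProbabilityMeasure (P n)]
    (μhat νhat : ∀ n, Ω n → Measure X)
    (hμprob : ∀ n ω, IsProbabilityMeasure (μhat n ω))
    (hνprob : ∀ n ω, IsProbabilityMeasure (νhat n ω))
    -- total variation distance tends to 0 in probability
    (htv : ∀ t : ℝ, 0 < t →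
      Tendsto (fun n => P n {ω | t < tvDist (μhat n ω) (νhat n ω)}) atTop (nhds 0))
    -- the `m`-th moments `M_m(μ̂ n, ν̂ n)` are bounded in probability
    (hmom : ∀ ε : ℝ, 0 < ε → ∃ M : ℝ, 0 < M ∧ ∃ N : ℕ, ∀ n ≥ N,
      P n {ω | ENNReal.ofReal M <
          (∫⁻ x, ENNReal.ofReal (dist x x₀ ^ m) ∂ μhat n ω) +
            ∫⁻ y, ENNReal.ofReal (dist y x₀ ^ m) ∂ νhat n ω} < ENNReal.ofReal ε) :
    ∀ t : ℝ, 0 < t →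
      Tendsto (fun n => P n {ω | t < wassersteinDist s (μhat n ω) (νhat n ω)})
        atTop (nhds 0) := by
  intro t ht
  have hs0 : 0 < s := lt_of_lt_of_le one_pos hs
  have hm0 : 0 < m := lt_trans hs0 hm
  have hsm : 0 < 1 - s / m := by
    have : s / m < 1 := (div_lt_one hm0).2 hm
    linarith
  rw [ENNReal.tendsto_nhds_zero]
  intro ε hε
  set q := min (ε / 2) 1 with hq
  have hq0 : q ≠ 0 :=
    (lt_min (ENNReal.half_pos hε.ne') one_pos).ne'
  have hqne : q ≠ ⊤ := by
    refine ne_top_of_le_ne_top (by simp) (min_le_right _ _)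
  have hqpos : 0 < q.toReal := ENNReal.toReal_pos hq0 hqne
  have hqof : ENNReal.ofReal q.toReal = q := ENNReal.ofReal_toReal hqne
  obtain ⟨M, hM, N₁, hN₁⟩ := hmom q.toReal hqpos
  set K := 2 ^ (s + 1) * M ^ (s / m) with hKdef
  have hK0 : 0 < K := by positivity
  set δ := (t ^ s / K) ^ (1 - s / m)⁻¹ with hδdef
  have hδ0 : 0 < δ := by positivity
  have hbound : (2 ^ (s + 1) * M ^ (s / m) * δ ^ (1 - s / m)) ^ (1 / s) = t := by
    have h1 : δ ^ (1 - s / m) = t ^ s / K := by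
      rw [hδdef, ← Real.rpow_mul (by positivity), inv_mul_cancel₀ hsm.ne', Real.rpow_one]
    rw [h1, ← hKdef, mul_comm, div_mul_cancel₀ _ hK0.ne', ← Real.rpow_mul ht.le,
      mul_one_div, div_self hs0.ne', Real.rpow_one]
  have htv2 := (ENNReal.tendsto_nhds_zero.mp (htv δ hδ0)) (ε / 2)
    (ENNReal.half_pos hε.ne')
  rw [eventually_atTop] at htv2
  obtain ⟨N₂, hN₂⟩ := htv2
  refine eventually_atTop.2 ⟨max N₁ N₂, fun n hn => ?_⟩
  have hsub : {ω | t < wassersteinDist s (μhat n ω) (νhat n ω)} ⊆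
      {ω | δ < tvDist (μhat n ω) (νhat n ω)} ∪
      {ω | ENNReal.ofReal M <
          (∫⁻ x, ENNReal.ofReal (dist x x₀ ^ m) ∂ μhat n ω) +
            ∫⁻ y, ENNReal.ofReal (dist y x₀ ^ m) ∂ νhat n ω} := by
    intro ω hω
    by_contra hc
    simp only [Set.mem_union, Set.mem_setOf_eq, not_or, not_lt] at hc
    obtain ⟨h1, h2⟩ := hc
    have hμ' : ∫⁻ x, ENNReal.ofReal (dist x x₀ ^ m) ∂ μhat n ω ≤ ENNReal.ofReal M :=
      le_trans le_self_add h2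
    have hν' : ∫⁻ y, ENNReal.ofReal (dist y x₀ ^ m) ∂ νhat n ω ≤ ENNReal.ofReal M :=
      le_trans le_add_self h2
    haveI := hμprob n ω
    haveI := hνprob n ω
    have hWle := aux_det_bound hs hm x₀ hM hδ0.le (μhat n ω) (νhat n ω) hμ' hν' h1
    rw [hbound] at hWle
    have : ¬ t < wassersteinDist s (μhat n ω) (νhat n ω) := not_lt.2 hWle
    exact this hω
  calc P n {ω | t < wassersteinDist s (μhat n ω) (νhat n ω)}
      ≤ P n ({ω | δ < tvDist (μhat n ω) (νhat n ω)} ∪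
        {ω | ENNReal.ofReal M <
          (∫⁻ x, ENNReal.ofReal (dist x x₀ ^ m) ∂ μhat n ω) +
            ∫⁻ y, ENNReal.ofReal (dist y x₀ ^ m) ∂ νhat n ω}) := measure_mono hsub
    _ ≤ P n {ω | δ < tvDist (μhat n ω) (νhat n ω)} + P n {ω | ENNReal.ofReal M <
          (∫⁻ x, ENNReal.ofReal (dist x x₀ ^ m) ∂ μhat n ω) +
            ∫⁻ y, ENNReal.ofReal (dist y x₀ ^ m) ∂ νhat n ω} := measure_union_le _ _
    _ ≤ ε / 2 + ε / 2 := by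
        refine add_le_add (hN₂ n (le_trans (le_max_right _ _) hn)) ?_
        refine le_trans (hN₁ n (le_trans (le_max_left _ _) hn)).le ?_
        rw [hqof]
        exact min_le_left _ _
    _ = ε := ENNReal.add_halves ε
end
end

section
/- Proposition C.1 (classical smoothness conditions imply the tempered local-asymptotic-normality remainder bound, i.e., sufficient conditions for (A2)). Let (α_n) be a positive sequence with α_n → 0 and α_n·n → ∞, and fix θ* ∈ ℝ^p. Suppose there is r₀ > 0 such that, P_n-almost surely, θ ↦ log f_n(X^n|θ) is three times continuously differentiable on the closed ball B̄_{θ*}(r₀) := {θ : ‖θ − θ*‖₂ ≤ r₀}, and suppose: (i) there are measurable M̃_n : Ω_n → [0,∞) with sup_n E_{P_n}[M̃_n/n] < ∞ such that |∂³ log f_n(X^n|θ)/∂θ_i ∂θ_j ∂θ_k| < M̃_n for all indices i,j,k and all θ ∈ B̄_{θ*}(r₀); (ii) there exist random vectors Δ_n with Δ_n = O_P(1) and a symmetric positive definite matrix V ∈ ℝ^{p×p} such that (1/√n)·∇ log f_n(X^n|θ*) − V·Δ_n → 0 and (1/n)·∇² log f_n(X^n|θ*) + V → 0 in P_n-probability.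 Then, defining R_n(h) := α_n·[log f_n(X^n|θ* + h/√(α_n n)) − log f_n(X^n|θ*)] − √α_n·hᵀVΔ_n + (1/2)·hᵀVh, for every M > 0, r > 0 and ε > 0 there exists an integer N = N(M,r,ε) such that for all n with α_n·n > N, P_n( sup_{‖h‖₂ ≤ r} |R_n(h)| > M ) < ε. -/
open MeasureTheory Filter BigOperators

noncomputable section

lemma coord_le_norm {p : ℕ} (w : EuclideanSpace ℝ (Fin p)) (i : Fin p) :
    |w i| ≤ ‖w‖ := by
  rw [EuclideanSpace.norm_eq, ← Real.sqrt_sq_eq_abs]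
  apply Real.sqrt_le_sqrt
  simpa [Real.norm_eq_abs, sq_abs] using
    Finset.single_le_sum (f := fun j => w j ^ 2) (fun j _ => sq_nonneg _) (Finset.mem_univ i)

lemma eq_sum_coord {p : ℕ} (w : EuclideanSpace ℝ (Fin p)) :
    w = ∑ i, w i • basisE p i := by
  ext j
  rw [WithLp.ofLp_sum, Finset.sum_apply]
  simp [basisE, EuclideanSpace.single_apply]

lemma fderiv_apply_eq_sum {p : ℕ} (F : EuclideanSpace ℝ (Fin p) → ℝ)
    (x w : EuclideanSpace ℝ (Fin p)) :
    fderiv ℝ F x w = ∑ i, w i * fderiv ℝ F x (basisE p i) := by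
  conv_lhs => rw [eq_sum_coord w]
  rw [map_sum]
  simp [smul_eq_mul]

lemma hasDerivAt_comp_line {p : ℕ} {F : EuclideanSpace ℝ (Fin p) → ℝ}
    {θs v : EuclideanSpace ℝ (Fin p)} {t : ℝ}
    (hF : DifferentiableAt ℝ F (θs + t • v)) :
    HasDerivAt (fun s => F (θs + s • v))
      (∑ i, v i * fderiv ℝ F (θs + t • v) (basisE p i)) t := by
  have hc : HasDerivAt (fun s : ℝ => θs + s • v) v t := by
    simpa using (((hasDerivAt_id t).smul_const v).const_add θs)
  have := hF.hasFDerivAt.comp_hasDerivAt t hc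
  rwa [fderiv_apply_eq_sum F (θs + t • v) v] at this

lemma taylor3 {p : ℕ} (g : EuclideanSpace ℝ (Fin p) → ℝ)
    (θs v : EuclideanSpace ℝ (Fin p)) {r₀ Mb : ℝ}
    (hv : ‖v‖ < r₀)
    (hg : ContDiffOn ℝ 3 g (Metric.closedBall θs r₀))
    (hM : ∀ θ ∈ Metric.closedBall θs r₀, ∀ i j k, |d3 g θ i j k| ≤ Mb) :
    |g (θs + v) - g θs - ∑ i, v i * d1 g θs i
        - (1/2) * ∑ i, v i * ∑ j, v j * d2 g θs j i|
      ≤ Mb * (p:ℝ)^3 * ‖v‖^3 / 6 := by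
  set F1 : EuclideanSpace ℝ (Fin p) → ℝ := fun x => ∑ i, v i * d1 g x i with hF1
  set F2 : EuclideanSpace ℝ (Fin p) → ℝ := fun x => ∑ i, v i * ∑ j, v j * d2 g x j i with hF2
  set F3 : EuclideanSpace ℝ (Fin p) → ℝ :=
    fun x => ∑ i, v i * ∑ j, v j * ∑ k, v k * d3 g x k j i with hF3
  set K : ℝ := Mb * (p:ℝ)^3 * ‖v‖^3 with hK
  -- membership of the segment
  have hmem : ∀ t : ℝ, t ∈ Set.Icc (0:ℝ) 1 → θs + t • v ∈ Metric.ball θs r₀ := by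
    intro t ht
    rw [Metric.mem_ball, dist_eq_norm, add_sub_cancel_left, norm_smul]
    calc ‖t‖ * ‖v‖ ≤ 1 * ‖v‖ := by
          apply mul_le_mul_of_nonneg_right _ (norm_nonneg v)
          rw [Real.norm_eq_abs, abs_le]; exact ⟨by linarith [ht.1], ht.2⟩
      _ < r₀ := by simpa using hv
  have hCA : ∀ x ∈ Metric.ball θs r₀, ContDiffAt ℝ 3 g x := fun x hx =>
    hg.contDiffAt (Filter.mem_of_superset (Metric.isOpen_ball.mem_nhds hx)
      Metric.ball_subset_closedBall)
  -- smoothness of d1, d2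
  have hd1CD : ∀ i, ∀ x ∈ Metric.ball θs r₀, ContDiffAt ℝ 2 (fun y => d1 g y i) x := by
    intro i x hx
    have h1 : ContDiffAt ℝ 2 (fderiv ℝ g) x := (hCA x hx).fderiv_right (by norm_num)
    exact ((ContinuousLinearMap.apply ℝ ℝ (basisE p i)).contDiff.contDiffAt).comp x h1
  have hd2CD : ∀ i j, ∀ x ∈ Metric.ball θs r₀,
      ContDiffAt ℝ 1 (fun y => d2 g y j i) x := by
    intro i j x hx
    have h1 : ContDiffAt ℝ 1 (fderiv ℝ (fun y => d1 g y i)) x :=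
      (hd1CD i x hx).fderiv_right (by norm_num)
    exact ((ContinuousLinearMap.apply ℝ ℝ (basisE p j)).contDiff.contDiffAt).comp x h1
  -- derivatives along the segment
  have hD0 : ∀ t ∈ Set.Icc (0:ℝ) 1,
      HasDerivAt (fun s => g (θs + s • v)) (F1 (θs + t • v)) t := by
    intro t ht
    exact hasDerivAt_comp_line ((hCA _ (hmem t ht)).differentiableAt (by norm_num))
  have hD1 : ∀ t ∈ Set.Icc (0:ℝ) 1,
      HasDerivAt (fun s => F1 (θs + s • v)) (F2 (θs + t • v)) t := by
    intro t ht
    apply HasDerivAt.fun_sum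
    intro i _
    exact (hasDerivAt_comp_line
      ((hd1CD i _ (hmem t ht)).differentiableAt (by norm_num))).const_mul (v i)
  have hD2 : ∀ t ∈ Set.Icc (0:ℝ) 1,
      HasDerivAt (fun s => F2 (θs + s • v)) (F3 (θs + t • v)) t := by
    intro t ht
    apply HasDerivAt.fun_sum
    intro i _
    apply HasDerivAt.const_mul (v i)
    apply HasDerivAt.fun_sum
    intro j _
    exact (hasDerivAt_comp_line
      ((hd2CD i j _ (hmem t ht)).differentiableAt (by norm_num))).const_mul (v j)
  -- bound on F3
  have habs : ∀ x ∈ Metric.closedBall θs r₀, |F3 x| ≤ K := by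
    intro x hx
    have hin : ∀ i j, |∑ k, v k * d3 g x k j i| ≤ (p:ℝ) * (‖v‖ * Mb) := by
      intro i j
      calc |∑ k, v k * d3 g x k j i| ≤ ∑ k, |v k * d3 g x k j i| :=
            Finset.abs_sum_le_sum_abs _ _
        _ ≤ ∑ _k : Fin p, ‖v‖ * Mb := by
            apply Finset.sum_le_sum
            intro k _
            rw [abs_mul]
            exact mul_le_mul (coord_le_norm v k) (hM x hx k j i) (abs_nonneg _)
              (norm_nonneg _)
        _ = (p:ℝ) * (‖v‖ * Mb) := by simp [mul_comm]
    have hmid : ∀ i, |∑ j, v j * ∑ k, v k * d3 g x k j i|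
        ≤ (p:ℝ) * (‖v‖ * ((p:ℝ) * (‖v‖ * Mb))) := by
      intro i
      calc |∑ j, v j * ∑ k, v k * d3 g x k j i| ≤ ∑ j, |v j * ∑ k, v k * d3 g x k j i| :=
            Finset.abs_sum_le_sum_abs _ _
        _ ≤ ∑ _j : Fin p, ‖v‖ * ((p:ℝ) * (‖v‖ * Mb)) := by
            apply Finset.sum_le_sum
            intro j _
            rw [abs_mul]
            exact mul_le_mul (coord_le_norm v j) (hin i j) (abs_nonneg _) (norm_nonneg _)
        _ = (p:ℝ) * (‖v‖ * ((p:ℝ) * (‖v‖ * Mb))) := by simp [mul_comm]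
    calc |F3 x| ≤ ∑ i, |v i * ∑ j, v j * ∑ k, v k * d3 g x k j i| :=
          Finset.abs_sum_le_sum_abs _ _
      _ ≤ ∑ _i : Fin p, ‖v‖ * ((p:ℝ) * (‖v‖ * ((p:ℝ) * (‖v‖ * Mb)))) := by
          apply Finset.sum_le_sum
          intro i _
          rw [abs_mul]
          exact mul_le_mul (coord_le_norm v i) (hmid i) (abs_nonneg _) (norm_nonneg _)
      _ = (p:ℝ) * (‖v‖ * ((p:ℝ) * (‖v‖ * ((p:ℝ) * (‖v‖ * Mb))))) := by simp [mul_comm]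
      _ = K := by rw [hK]; ring
  -- the three fencing steps
  set ψ2 : ℝ → ℝ := fun t => F2 (θs + t • v) - F2 θs with hψ2
  set ψ1 : ℝ → ℝ := fun t => F1 (θs + t • v) - F1 θs - t * F2 θs with hψ1
  set ψ0 : ℝ → ℝ := fun t => g (θs + t • v) - g θs - t * F1 θs - t^2/2 * F2 θs with hψ0
  have hψ2D : ∀ t ∈ Set.Icc (0:ℝ) 1, HasDerivAt ψ2 (F3 (θs + t • v)) t := by
    intro t ht
    exact (hD2 t ht).sub_const (F2 θs)
  have hψ1D : ∀ t ∈ Set.Icc (0:ℝ) 1, HasDerivAt ψ1 (ψ2 t) t := by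
    intro t ht
    have h1 : HasDerivAt (fun s : ℝ => s * F2 θs) (F2 θs) t := by
      simpa using (hasDerivAt_id t).mul_const (F2 θs)
    exact ((hD1 t ht).sub_const (F1 θs)).sub h1
  have hψ0D : ∀ t ∈ Set.Icc (0:ℝ) 1, HasDerivAt ψ0 (ψ1 t) t := by
    intro t ht
    have h1 : HasDerivAt (fun s : ℝ => s * F1 θs) (F1 θs) t := by
      simpa using (hasDerivAt_id t).mul_const (F1 θs)
    have h2 : HasDerivAt (fun s : ℝ => s^2/2 * F2 θs) (t * F2 θs) t := by
      have := ((hasDerivAt_pow 2 t).div_const 2).mul_const (F2 θs)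
      refine this.congr_deriv ?_
      push_cast
      ring
    exact (((hD0 t ht).sub_const (g θs)).sub h1).sub h2
  -- step 1 : |ψ2 t| ≤ K * t
  have step1 : ∀ t ∈ Set.Icc (0:ℝ) 1, ‖ψ2 t‖ ≤ K * t := by
    have hB : ∀ x : ℝ, HasDerivAt (fun t => K * t) K x := by
      intro x
      simpa using (hasDerivAt_id x).const_mul K
    have ha : ‖ψ2 0‖ ≤ K * 0 := by simp [hψ2]
    have bound : ∀ t ∈ Set.Ico (0:ℝ) 1, ‖F3 (θs + t • v)‖ ≤ K := by
      intro t ht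
      rw [Real.norm_eq_abs]
      exact habs _ (Metric.ball_subset_closedBall (hmem t (Set.mem_Icc_of_Ico ht)))
    exact fun t ht => image_norm_le_of_norm_deriv_right_le_deriv_boundary
      (fun t ht => (hψ2D t ht).continuousAt.continuousWithinAt)
      (fun t ht => (hψ2D t (Set.mem_Icc_of_Ico ht)).hasDerivWithinAt)
      ha hB bound ht
  have step2 : ∀ t ∈ Set.Icc (0:ℝ) 1, ‖ψ1 t‖ ≤ K/2 * t^2 := by
    have hB : ∀ x : ℝ, HasDerivAt (fun t => K/2 * t^2) (K * x) x := by
      intro x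
      have := (hasDerivAt_pow 2 x).const_mul (K/2)
      refine this.congr_deriv ?_
      push_cast
      ring
    have ha : ‖ψ1 0‖ ≤ K/2 * 0^2 := by simp [hψ1]
    have bound : ∀ t ∈ Set.Ico (0:ℝ) 1, ‖ψ2 t‖ ≤ K * t :=
      fun t ht => step1 t (Set.mem_Icc_of_Ico ht)
    exact fun t ht => image_norm_le_of_norm_deriv_right_le_deriv_boundary
      (fun t ht => (hψ1D t ht).continuousAt.continuousWithinAt)
      (fun t ht => (hψ1D t (Set.mem_Icc_of_Ico ht)).hasDerivWithinAt)
      ha hB bound ht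
  have step3 : ∀ t ∈ Set.Icc (0:ℝ) 1, ‖ψ0 t‖ ≤ K/6 * t^3 := by
    have hB : ∀ x : ℝ, HasDerivAt (fun t => K/6 * t^3) (K/2 * x^2) x := by
      intro x
      have := (hasDerivAt_pow 3 x).const_mul (K/6)
      refine this.congr_deriv ?_
      push_cast
      ring
    have ha : ‖ψ0 0‖ ≤ K/6 * 0^3 := by simp [hψ0]
    have bound : ∀ t ∈ Set.Ico (0:ℝ) 1, ‖ψ1 t‖ ≤ K/2 * t^2 :=
      fun t ht => step2 t (Set.mem_Icc_of_Ico ht)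
    exact fun t ht => image_norm_le_of_norm_deriv_right_le_deriv_boundary
      (fun t ht => (hψ0D t ht).continuousAt.continuousWithinAt)
      (fun t ht => (hψ0D t (Set.mem_Icc_of_Ico ht)).hasDerivWithinAt)
      ha hB bound ht
  have final := step3 1 (by norm_num)
  rw [Real.norm_eq_abs] at final
  have : ψ0 1 = g (θs + v) - g θs - ∑ i, v i * d1 g θs i
      - (1/2) * ∑ i, v i * ∑ j, v j * d2 g θs j i := by
    simp [hψ0, hF1, hF2]
  rw [this] at final
  calc |g (θs + v) - g θs - ∑ i, v i * d1 g θs i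
        - (1/2) * ∑ i, v i * ∑ j, v j * d2 g θs j i| ≤ K/6 * 1^3 := final
    _ = Mb * (p:ℝ)^3 * ‖v‖^3 / 6 := by rw [hK]; ring

lemma markov_bound' {Ω : Type} [MeasurableSpace Ω] (μ : Measure Ω) [IsProbabilityMeasure μ]
    (f : Ω → ℝ) (hnn : ∀ ω, 0 ≤ f ω) (hint : Integrable f μ) {C K : ℝ}
    (hC : ∫ ω, f ω ∂μ ≤ C) (hK : 0 < K) :
    μ {ω | K < f ω} ≤ ENNReal.ofReal (C / K) := by
  have h1 := mul_meas_ge_le_integral_of_nonneg (Filter.Eventually.of_forall hnn) hint K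
  have h2 : μ {ω | K < f ω} ≤ μ {ω | K ≤ f ω} :=
    measure_mono fun ω hω => le_of_lt (Set.mem_setOf_eq ▸ hω)
  refine h2.trans ?_
  have hC0 : 0 ≤ C := le_trans (integral_nonneg hnn) hC
  rw [ENNReal.le_ofReal_iff_toReal_le (measure_ne_top μ _) (div_nonneg hC0 hK.le)]
  rw [le_div_iff₀ hK]
  rw [measureReal_def] at h1
  linarith [h1]

lemma exists_good_N (α : ℕ → ℝ) (hα0 : Tendsto α atTop (nhds 0))
    {Q : ℕ → Prop} (hQ : ∀ᶠ n in atTop, Q n) (S : ℝ) :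
    ∃ N : ℕ, ∀ n : ℕ, (N : ℝ) < α n * n →
      Q n ∧ α n ≤ 1 ∧ 1 ≤ n ∧ S^2 < α n * n := by
  obtain ⟨N₀, hN₀⟩ := eventually_atTop.mp hQ
  obtain ⟨N₁, hN₁⟩ := eventually_atTop.mp
    (hα0.eventually_lt_const (by norm_num : (0:ℝ) < 1))
  set m := max N₀ N₁ with hm
  set B := ∑ k ∈ Finset.range m, |α k * k| with hB
  refine ⟨⌈max B (S^2)⌉₊, ?_⟩
  intro n hn
  have hNB : B ≤ (⌈max B (S^2)⌉₊ : ℝ) := le_trans (le_max_left _ _) (Nat.le_ceil _)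
  have hNS : S^2 ≤ (⌈max B (S^2)⌉₊ : ℝ) := le_trans (le_max_right _ _) (Nat.le_ceil _)
  have hnm : m ≤ n := by
    by_contra hlt
    push_neg at hlt
    have : α n * n ≤ B :=
      calc α n * n ≤ |α n * n| := le_abs_self _
        _ ≤ B := Finset.single_le_sum (f := fun k => |α k * (k:ℝ)|)
            (fun k _ => abs_nonneg _) (Finset.mem_range.mpr hlt)
    linarith
  have hQn : Q n := hN₀ n (le_trans (le_max_left _ _) hnm)
  have hα1 : α n ≤ 1 := (hN₁ n (le_trans (le_max_right _ _) hnm)).le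
  have hn1 : 1 ≤ n := by
    by_contra hn0
    push_neg at hn0
    interval_cases n
    simp at hn
    have : (0:ℝ) ≤ (⌈max B (S^2)⌉₊ : ℝ) := Nat.cast_nonneg _
    linarith
  exact ⟨hQn, hα1, hn1, lt_of_le_of_lt hNS hn⟩


set_option maxHeartbeats 2000000 in
/-- **Proposition C.1** (classical smoothness conditions imply the tempered
local-asymptotic-normality remainder bound, i.e., sufficient conditions for (A2)). -/
theorem sufficient_conditions_for_A2
    {p : ℕ} {Ω : ℕ → Type} [∀ n, MeasurableSpace (Ω n)]
    (P : ∀ n, Measure (Ω n)) [∀ n, IsProbabilityMeasure (P n)]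
    (L : ∀ n, Ω n → EuclideanSpace ℝ (Fin p) → ℝ)
    (θstar : EuclideanSpace ℝ (Fin p))
    (V : Matrix (Fin p) (Fin p) ℝ)
    (Δ : ∀ n, Ω n → EuclideanSpace ℝ (Fin p))
    (α : ℕ → ℝ) (r₀ : ℝ)
    (hLmeas : ∀ n, Measurable (Function.uncurry (L n)))
    (hLpos : ∀ n ω θ, 0 < L n ω θ)
    (hΔmeas : ∀ n, Measurable (Δ n))
    -- tempering sequence: `α n → 0` and `α n * n → ∞`
    (hαpos : ∀ n, 0 < α n)
    (hα0 : Tendsto α atTop (nhds 0))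
    (hαn : Tendsto (fun n => α n * (n : ℝ)) atTop atTop)
    -- the log-likelihood is a.s. three times continuously differentiable near `θstar`
    (hr₀ : 0 < r₀)
    (hsmooth : ∀ n, ∀ᵐ ω ∂ P n,
      ContDiffOn ℝ 3 (fun θ => Real.log (L n ω θ)) (Metric.closedBall θstar r₀))
    -- (i) third derivatives are dominated by `M̃ n` with `sup_n E[M̃ n / n] < ∞`
    (Mt : ∀ n, Ω n → ℝ)
    (hMtmeas : ∀ n, Measurable (Mt n))
    (hMtnn : ∀ n ω, 0 ≤ Mt n ω)
    (hMtint : ∀ n, Integrable (fun ω => Mt n ω / (n : ℝ)) (P n))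
    (hMtE : ∃ C : ℝ, ∀ n, (∫ ω, Mt n ω / (n : ℝ) ∂ P n) ≤ C)
    (hbound : ∀ n, ∀ᵐ ω ∂ P n, ∀ θ ∈ Metric.closedBall θstar r₀, ∀ i j k : Fin p,
      |d3 (fun θ' => Real.log (L n ω θ')) θ i j k| < Mt n ω)
    -- (ii) first- and second-order expansions at `θstar`
    (hΔOP : ∀ ε : ℝ, 0 < ε → ∃ M : ℝ, 0 < M ∧ ∃ N : ℕ, ∀ n ≥ N,
      P n {ω | M < ‖Δ n ω‖} < ENNReal.ofReal ε)
    (hV : V.IsSymm ∧ V.PosDef)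
    (hgrad : TendstoInProb P (fun n ω =>
        (WithLp.equiv 2 (Fin p → ℝ)).symm (fun i =>
          (Real.sqrt n)⁻¹ * d1 (fun θ => Real.log (L n ω θ)) θstar i -
            ∑ j, V i j * Δ n ω j))
      (0 : EuclideanSpace ℝ (Fin p)))
    (hhess : ∀ i j : Fin p, TendstoInProb P
        (fun n ω => (n : ℝ)⁻¹ * d2 (fun θ => Real.log (L n ω θ)) θstar i j + V i j)
      (0 : ℝ)) :
    ∀ M : ℝ, 0 < M → ∀ r : ℝ, 0 < r → ∀ ε : ℝ, 0 < ε →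
      ∃ N : ℕ, ∀ n : ℕ, (N : ℝ) < α n * n →
        P n {ω | ∃ h : EuclideanSpace ℝ (Fin p), ‖h‖ ≤ r ∧
          M < |α n * (Real.log (L n ω (θstar + (Real.sqrt (α n * (n : ℝ)))⁻¹ • h)) -
                  Real.log (L n ω θstar))
              - Real.sqrt (α n) * ∑ i, ∑ j, h i * V i j * Δ n ω j
              + (1 / 2) * ∑ i, ∑ j, h i * V i j * h j|} < ENNReal.ofReal ε := by
  intro M hM r hr ε hε
  obtain ⟨C, hC⟩ := hMtE
  have hC0 : 0 ≤ C :=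
    le_trans (integral_nonneg (fun ω => div_nonneg (hMtnn 0 ω) (Nat.cast_nonneg 0))) (hC 0)
  have hp1 : (0:ℝ) < (p:ℝ) * r + 1 := by positivity
  have hp2 : (0:ℝ) < (p:ℝ)^2 * r^2 + 1 := by positivity
  have hp3 : (0:ℝ) < (p:ℝ)^3 * r^3 + 1 := by positivity
  obtain ⟨δ₁, hδ₁def⟩ : ∃ x : ℝ, x = M / (3 * ((p:ℝ) * r + 1)) := ⟨_, rfl⟩
  obtain ⟨δ₂, hδ₂def⟩ : ∃ x : ℝ, x = M / (3 * ((p:ℝ)^2 * r^2 + 1)) := ⟨_, rfl⟩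
  have hδ₁ : 0 < δ₁ := by rw [hδ₁def]; positivity
  have hδ₂ : 0 < δ₂ := by rw [hδ₂def]; positivity
  obtain ⟨K, hKdef⟩ : ∃ x : ℝ, x = (3 * C + 3) / ε := ⟨_, rfl⟩
  have hK : 0 < K := by rw [hKdef]; positivity
  obtain ⟨S, hSdef⟩ : ∃ x : ℝ, x = K * ((p:ℝ)^3 * r^3 + 1) / (2 * M) := ⟨_, rfl⟩
  have hS : 0 < S := by rw [hSdef]; positivity
  obtain ⟨S', hS'def⟩ : ∃ x : ℝ, x = max S (r / r₀) := ⟨_, rfl⟩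
  have hS'pos : 0 < S' := by rw [hS'def]; exact lt_of_lt_of_le hS (le_max_left _ _)
  -- the two probabilistic events are eventually small
  have hQ : ∀ᶠ n in atTop,
      (P n {ω | δ₁ < ‖(WithLp.equiv 2 (Fin p → ℝ)).symm (fun i =>
          (Real.sqrt n)⁻¹ * d1 (fun θ => Real.log (L n ω θ)) θstar i -
            ∑ j, V i j * Δ n ω j) - (0 : EuclideanSpace ℝ (Fin p))‖} <
        ENNReal.ofReal (ε/3)) ∧
      (∀ i j : Fin p, P n {ω | δ₂ < ‖(n:ℝ)⁻¹ * d2 (fun θ => Real.log (L n ω θ)) θstar i j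
          + V i j - (0:ℝ)‖} < ENNReal.ofReal (ε/(3*((p:ℝ)^2+1)))) := by
    have hg := hgrad δ₁ hδ₁
    refine (hg.eventually_lt_const (ENNReal.ofReal_pos.mpr (by positivity))).and ?_
    rw [eventually_all]
    intro i
    rw [eventually_all]
    intro j
    exact (hhess i j δ₂ hδ₂).eventually_lt_const (ENNReal.ofReal_pos.mpr (by positivity))
  obtain ⟨N, hN⟩ := exists_good_N α hα0 hQ S'
  refine ⟨N, ?_⟩
  intro n hn
  obtain ⟨⟨hQg, hQe⟩, hα1, hn1, hS'2⟩ := hN n hn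
  have hnpos : (0:ℝ) < (n:ℝ) := by exact_mod_cast hn1
  have hαn : 0 < α n * n := mul_pos (hαpos n) hnpos
  have hsq : 0 < Real.sqrt (α n * n) := Real.sqrt_pos.mpr hαn
  have hS'sq : S' < Real.sqrt (α n * n) := by
    nlinarith only [Real.sq_sqrt hαn.le, hS'2, hS'pos, Real.sqrt_nonneg (α n * n)]
  -- the negligible set where smoothness or the third-derivative bound fails
  have hNb : P n {ω | ¬ (ContDiffOn ℝ 3 (fun θ => Real.log (L n ω θ))
      (Metric.closedBall θstar r₀) ∧
      ∀ θ ∈ Metric.closedBall θstar r₀, ∀ i j k : Fin p,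
        |d3 (fun θ' => Real.log (L n ω θ')) θ i j k| < Mt n ω)} = 0 :=
    ae_iff.mp ((hsmooth n).and (hbound n))
  -- Markov bound
  have hSt : P n {ω | K < Mt n ω / (n:ℝ)} ≤ ENNReal.ofReal (C / K) :=
    markov_bound' (P n) _ (fun ω => div_nonneg (hMtnn n ω) hnpos.le) (hMtint n) (hC n) hK
  -- the deterministic core estimate
  have hgood : ∀ ω : Ω n,
      ContDiffOn ℝ 3 (fun θ => Real.log (L n ω θ)) (Metric.closedBall θstar r₀) →
      (∀ θ ∈ Metric.closedBall θstar r₀, ∀ i j k : Fin p,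
        |d3 (fun θ' => Real.log (L n ω θ')) θ i j k| < Mt n ω) →
      ‖(WithLp.equiv 2 (Fin p → ℝ)).symm (fun i =>
          (Real.sqrt n)⁻¹ * d1 (fun θ => Real.log (L n ω θ)) θstar i -
            ∑ j, V i j * Δ n ω j)‖ ≤ δ₁ →
      (∀ i j : Fin p, |(n:ℝ)⁻¹ * d2 (fun θ => Real.log (L n ω θ)) θstar i j + V i j| ≤ δ₂) →
      Mt n ω / (n:ℝ) ≤ K →
      ∀ h : EuclideanSpace ℝ (Fin p), ‖h‖ ≤ r →
        |α n * (Real.log (L n ω (θstar + (Real.sqrt (α n * (n : ℝ)))⁻¹ • h)) -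
                Real.log (L n ω θstar))
              - Real.sqrt (α n) *
                  ∑ i, ∑ j, h i * V i j * Δ n ω j
              + (1 / 2) * ∑ i, ∑ j, h i * V i j * h j| ≤ M := by
    intro ω hsm hbd hgb heb hmb h hhr
    set g : EuclideanSpace ℝ (Fin p) → ℝ := fun θ => Real.log (L n ω θ) with hgdef
    set t : ℝ := (Real.sqrt (α n * (n:ℝ)))⁻¹ with htdef
    set a : ℝ := Real.sqrt (α n) with hadef
    set s : ℝ := Real.sqrt (n:ℝ) with hsdef
    have ha : 0 < a := Real.sqrt_pos.mpr (hαpos n)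
    have hs : 0 < s := Real.sqrt_pos.mpr hnpos
    have has : Real.sqrt (α n * (n:ℝ)) = a * s := Real.sqrt_mul (hαpos n).le _
    have ht : 0 < t := by rw [htdef]; exact inv_pos.mpr hsq
    have ha2 : a^2 = α n := Real.sq_sqrt (hαpos n).le
    have hs2 : s^2 = (n:ℝ) := Real.sq_sqrt hnpos.le
    set v : EuclideanSpace ℝ (Fin p) := t • h with hvdef
    have hvnorm : ‖v‖ ≤ t * r := by
      rw [hvdef, norm_smul, Real.norm_eq_abs, abs_of_pos ht]
      exact mul_le_mul_of_nonneg_left hhr ht.le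
    have htr : t * r < r₀ := by
      have h1 : r / r₀ < Real.sqrt (α n * n) :=
        lt_of_le_of_lt (by rw [hS'def]; exact le_max_right S (r/r₀)) hS'sq
      have h2 : r < Real.sqrt (α n * n) * r₀ := (div_lt_iff₀ hr₀).mp h1
      have h3 : t * r = r / Real.sqrt (α n * (n:ℝ)) := by rw [htdef]; ring
      rw [h3, div_lt_iff₀ hsq]
      exact h2.trans_eq (mul_comm _ _)
    have hvr : ‖v‖ < r₀ := lt_of_le_of_lt hvnorm htr
    have htaylor := taylor3 g θstar v hvr hsm (fun θ hθ i j k => (hbd θ hθ i j k).le)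
    set T : ℝ := g (θstar + v) - g θstar - ∑ i, v i * d1 g θstar i
        - (1/2) * ∑ i, v i * ∑ j, v j * d2 g θstar j i with hTdef
    have hat : α n * t = a * s⁻¹ := by
      rw [htdef, has, ← ha2, mul_inv]
      field_simp
    have hat2 : α n * t^2 = (n:ℝ)⁻¹ := by
      rw [htdef, has, ← ha2, ← hs2]
      field_simp
    have hVsym : ∀ i j, V j i = V i j := fun i j => hV.1.apply i j
    have hvi : ∀ i : Fin p, v i = t * h i := fun _ => rfl
    have hrw1 : Real.log (L n ω (θstar + v)) = g (θstar + v) := rfl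
    have hrw2 : Real.log (L n ω θstar) = g θstar := rfl
    clear_value g t a s v T
    -- algebraic identity
    have e1 : ∀ i : Fin p,
        α n * (v i * d1 g θstar i) - a * (∑ j, h i * V i j * Δ n ω j)
          = a * (h i * (s⁻¹ * d1 g θstar i - ∑ j, V i j * Δ n ω j)) := by
      intro i
      have hin : ∑ j, h i * V i j * Δ n ω j = h i * ∑ j, V i j * Δ n ω j := by
        rw [Finset.mul_sum]
        exact Finset.sum_congr rfl fun j _ => by ring
      rw [hvi i, hin]
      linear_combination (h i * d1 g θstar i) * hat
    have e2 : ∀ i : Fin p,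
        α n * ((1/2) * (v i * ∑ j, v j * d2 g θstar j i))
            + (1/2) * (∑ j, h i * V i j * h j)
          = (1/2) * (h i * ∑ j, h j * ((n:ℝ)⁻¹ * d2 g θstar j i + V j i)) := by
      intro i
      have inner1 : ∑ j, v j * d2 g θstar j i = t * ∑ j, h j * d2 g θstar j i := by
        rw [Finset.mul_sum]
        exact Finset.sum_congr rfl fun j _ => by
          rw [hvi j]; ring
      have inner2 : ∑ j, h j * ((n:ℝ)⁻¹ * d2 g θstar j i + V j i)
          = (n:ℝ)⁻¹ * (∑ j, h j * d2 g θstar j i) + ∑ j, h j * V j i := by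
        rw [Finset.mul_sum, ← Finset.sum_add_distrib]
        exact Finset.sum_congr rfl fun j _ => by ring
      have inner3 : ∑ j, h i * V i j * h j = h i * ∑ j, h j * V j i := by
        rw [Finset.mul_sum]
        exact Finset.sum_congr rfl fun j _ => by rw [hVsym j i]; ring
      rw [inner1, inner2, inner3, hvi i]
      linear_combination (1/2 * h i * (∑ j, h j * d2 g θstar j i)) * hat2
    have sub1 : α n * (∑ i, v i * d1 g θstar i)
          - a * (∑ i, ∑ j, h i * V i j * Δ n ω j)
        = a * ∑ i, h i * (s⁻¹ * d1 g θstar i - ∑ j, V i j * Δ n ω j) := by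
      calc α n * (∑ i, v i * d1 g θstar i) - a * (∑ i, ∑ j, h i * V i j * Δ n ω j)
          = ∑ i, (α n * (v i * d1 g θstar i) - a * (∑ j, h i * V i j * Δ n ω j)) := by
            rw [Finset.mul_sum, Finset.mul_sum, ← Finset.sum_sub_distrib]
        _ = ∑ i, a * (h i * (s⁻¹ * d1 g θstar i - ∑ j, V i j * Δ n ω j)) :=
            Finset.sum_congr rfl fun i _ => e1 i
        _ = a * ∑ i, h i * (s⁻¹ * d1 g θstar i - ∑ j, V i j * Δ n ω j) :=
            (Finset.mul_sum _ _ _).symm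
    have sub2 : α n * ((1/2) * ∑ i, v i * ∑ j, v j * d2 g θstar j i)
          + (1/2) * (∑ i, ∑ j, h i * V i j * h j)
        = (1/2) * ∑ i, h i * ∑ j, h j * ((n:ℝ)⁻¹ * d2 g θstar j i + V j i) := by
      calc α n * ((1/2) * ∑ i, v i * ∑ j, v j * d2 g θstar j i)
            + (1/2) * (∑ i, ∑ j, h i * V i j * h j)
          = ∑ i, (α n * ((1/2) * (v i * ∑ j, v j * d2 g θstar j i))
              + (1/2) * (∑ j, h i * V i j * h j)) := by
            rw [Finset.mul_sum, Finset.mul_sum, Finset.mul_sum, ← Finset.sum_add_distrib]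
        _ = ∑ i, (1/2) * (h i * ∑ j, h j * ((n:ℝ)⁻¹ * d2 g θstar j i + V j i)) :=
            Finset.sum_congr rfl fun i _ => e2 i
        _ = (1/2) * ∑ i, h i * ∑ j, h j * ((n:ℝ)⁻¹ * d2 g θstar j i + V j i) :=
            (Finset.mul_sum _ _ _).symm
    have hkey : α n * (g (θstar + v) - g θstar)
          - a * ∑ i, ∑ j, h i * V i j * Δ n ω j
          + (1/2) * ∑ i, ∑ j, h i * V i j * h j
        = α n * T
          + (a * ∑ i, h i * (s⁻¹ * d1 g θstar i - ∑ j, V i j * Δ n ω j))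
          + ((1/2) * ∑ i, h i * ∑ j, h j * ((n:ℝ)⁻¹ * d2 g θstar j i + V j i)) := by
      have hgT : g (θstar + v) - g θstar
          = T + (∑ i, v i * d1 g θstar i)
            + (1/2) * ∑ i, v i * ∑ j, v j * d2 g θstar j i := by
        rw [hTdef]; ring
      rw [hgT]
      linear_combination sub1 + sub2
    -- bounds on the three pieces
    have bT : α n * |T| ≤ M / 3 := by
      have hnn : (0:ℝ) ≤ Mt n ω * (p:ℝ)^3 := mul_nonneg (hMtnn n ω) (by positivity)
      have h1 : |T| ≤ Mt n ω * (p:ℝ)^3 * (t*r)^3 / 6 := by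
        have hv3 : ‖v‖^3 ≤ (t*r)^3 := pow_le_pow_left₀ (norm_nonneg v) hvnorm 3
        have := mul_le_mul_of_nonneg_left hv3 hnn
        calc |T| ≤ Mt n ω * (p:ℝ)^3 * ‖v‖^3 / 6 := htaylor
          _ ≤ Mt n ω * (p:ℝ)^3 * (t*r)^3 / 6 := by linarith only [this]
      have h2 : α n * (Mt n ω * (p:ℝ)^3 * (t*r)^3 / 6)
          = (Mt n ω / (n:ℝ)) * ((p:ℝ)^3 * r^3) / (6 * (a * s)) := by
        rw [htdef, has, ← ha2, ← hs2]
        field_simp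
      have h3 : (Mt n ω / (n:ℝ)) * ((p:ℝ)^3 * r^3) / (6 * (a * s))
          ≤ K * ((p:ℝ)^3 * r^3) / (6 * S) := by
        apply div_le_div₀ (mul_nonneg hK.le (by positivity))
          (mul_le_mul_of_nonneg_right hmb (by positivity))
          (mul_pos (by norm_num) hS)
        have h4 : S' < a * s := has ▸ hS'sq
        have h5 : S ≤ S' := by rw [hS'def]; exact le_max_left _ _
        linarith only [h4, h5]
      have h6 : K * ((p:ℝ)^3 * r^3) / (6 * S) ≤ M / 3 := by
        have hMne : M ≠ 0 := ne_of_gt hM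
        have hiden : M * (6 * (K * ((p:ℝ)^3 * r^3 + 1) / (2 * M)))
            = 3 * (K * ((p:ℝ)^3 * r^3 + 1)) := by
          field_simp
          ring
        rw [div_le_div_iff₀ (mul_pos (by norm_num) hS) (by norm_num : (0:ℝ) < 3),
          hSdef, hiden]
        nlinarith only [hK.le, (by positivity : (0:ℝ) ≤ (p:ℝ)^3 * r^3)]
      calc α n * |T| ≤ α n * (Mt n ω * (p:ℝ)^3 * (t*r)^3 / 6) :=
            mul_le_mul_of_nonneg_left h1 (hαpos n).le
        _ = (Mt n ω / (n:ℝ)) * ((p:ℝ)^3 * r^3) / (6 * (a * s)) := h2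
        _ ≤ K * ((p:ℝ)^3 * r^3) / (6 * S) := h3
        _ ≤ M / 3 := h6
    have bG : |a * ∑ i, h i * (s⁻¹ * d1 g θstar i - ∑ j, V i j * Δ n ω j)| ≤ M / 3 := by
      have hYi : ∀ i, |s⁻¹ * d1 g θstar i - ∑ j, V i j * Δ n ω j| ≤ δ₁ := by
        intro i
        exact le_trans (coord_le_norm ((WithLp.equiv 2 (Fin p → ℝ)).symm
          (fun i => s⁻¹ * d1 g θstar i - ∑ j, V i j * Δ n ω j)) i) hgb
      have hsum1 : |∑ i, h i * (s⁻¹ * d1 g θstar i - ∑ j, V i j * Δ n ω j)|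
          ≤ (p:ℝ) * (r * δ₁) := by
        calc |∑ i, h i * (s⁻¹ * d1 g θstar i - ∑ j, V i j * Δ n ω j)|
            ≤ ∑ i, |h i * (s⁻¹ * d1 g θstar i - ∑ j, V i j * Δ n ω j)| :=
              Finset.abs_sum_le_sum_abs _ _
          _ ≤ ∑ _i : Fin p, r * δ₁ := Finset.sum_le_sum fun i _ => by
              rw [abs_mul]
              exact mul_le_mul (le_trans (coord_le_norm h i) hhr) (hYi i)
                (abs_nonneg _) hr.le
          _ = (p:ℝ) * (r * δ₁) := by
              rw [Finset.sum_const, Finset.card_univ, Fintype.card_fin, nsmul_eq_mul]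
      rw [abs_mul, abs_of_pos ha]
      have ha1 : a ≤ 1 := by rw [hadef]; exact Real.sqrt_le_one.mpr hα1
      calc a * |∑ i, h i * (s⁻¹ * d1 g θstar i - ∑ j, V i j * Δ n ω j)|
          ≤ 1 * ((p:ℝ) * (r * δ₁)) := mul_le_mul ha1 hsum1 (abs_nonneg _) zero_le_one
        _ ≤ M / 3 := by
            rw [one_mul, hδ₁def,
              show (p:ℝ) * (r * (M / (3 * ((p:ℝ)*r+1))))
                = ((p:ℝ) * r * M) / (3 * ((p:ℝ)*r+1)) from by ring,
              div_le_div_iff₀ (by positivity : (0:ℝ) < 3*((p:ℝ)*r+1))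
                (by norm_num : (0:ℝ) < 3)]
            linarith only [hM.le]
    have bE : |(1/2) * ∑ i, h i * ∑ j, h j * ((n:ℝ)⁻¹ * d2 g θstar j i + V j i)|
        ≤ M / 3 := by
      have hEij : ∀ i j : Fin p, |(n:ℝ)⁻¹ * d2 g θstar j i + V j i| ≤ δ₂ :=
        fun i j => heb j i
      have hinner : ∀ i, |∑ j, h j * ((n:ℝ)⁻¹ * d2 g θstar j i + V j i)|
          ≤ (p:ℝ) * (r * δ₂) := by
        intro i
        calc |∑ j, h j * ((n:ℝ)⁻¹ * d2 g θstar j i + V j i)|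
            ≤ ∑ j, |h j * ((n:ℝ)⁻¹ * d2 g θstar j i + V j i)| :=
              Finset.abs_sum_le_sum_abs _ _
          _ ≤ ∑ _j : Fin p, r * δ₂ := Finset.sum_le_sum fun j _ => by
              rw [abs_mul]
              exact mul_le_mul (le_trans (coord_le_norm h j) hhr) (hEij i j)
                (abs_nonneg _) hr.le
          _ = (p:ℝ) * (r * δ₂) := by
              rw [Finset.sum_const, Finset.card_univ, Fintype.card_fin, nsmul_eq_mul]
      have houter : |∑ i, h i * ∑ j, h j * ((n:ℝ)⁻¹ * d2 g θstar j i + V j i)|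
          ≤ (p:ℝ) * (r * ((p:ℝ) * (r * δ₂))) := by
        calc |∑ i, h i * ∑ j, h j * ((n:ℝ)⁻¹ * d2 g θstar j i + V j i)|
            ≤ ∑ i, |h i * ∑ j, h j * ((n:ℝ)⁻¹ * d2 g θstar j i + V j i)| :=
              Finset.abs_sum_le_sum_abs _ _
          _ ≤ ∑ _i : Fin p, r * ((p:ℝ) * (r * δ₂)) := Finset.sum_le_sum fun i _ => by
              rw [abs_mul]
              exact mul_le_mul (le_trans (coord_le_norm h i) hhr) (hinner i)
                (abs_nonneg _) hr.le
          _ = (p:ℝ) * (r * ((p:ℝ) * (r * δ₂))) := by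
              rw [Finset.sum_const, Finset.card_univ, Fintype.card_fin, nsmul_eq_mul]
      rw [abs_mul]
      calc |(1/2 : ℝ)| * |∑ i, h i * ∑ j, h j * ((n:ℝ)⁻¹ * d2 g θstar j i + V j i)|
          ≤ 1 * ((p:ℝ) * (r * ((p:ℝ) * (r * δ₂)))) := by
            refine mul_le_mul ?_ houter (abs_nonneg _) zero_le_one
            rw [abs_of_pos (by norm_num : (0:ℝ) < 1/2)]
            norm_num
        _ ≤ M / 3 := by
            rw [one_mul, hδ₂def,
              show (p:ℝ) * (r * ((p:ℝ) * (r * (M / (3 * ((p:ℝ)^2*r^2+1))))))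
                = ((p:ℝ)^2 * r^2 * M) / (3 * ((p:ℝ)^2*r^2+1)) from by ring,
              div_le_div_iff₀ (by positivity : (0:ℝ) < 3*((p:ℝ)^2*r^2+1))
                (by norm_num : (0:ℝ) < 3)]
            linarith only [hM.le]
    -- final combination
    rw [hrw1, hrw2, hkey]
    calc |α n * T + (a * ∑ i, h i * (s⁻¹ * d1 g θstar i - ∑ j, V i j * Δ n ω j))
          + ((1/2) * ∑ i, h i * ∑ j, h j * ((n:ℝ)⁻¹ * d2 g θstar j i + V j i))|
        ≤ |α n * T| + |a * ∑ i, h i * (s⁻¹ * d1 g θstar i - ∑ j, V i j * Δ n ω j)|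
          + |(1/2) * ∑ i, h i * ∑ j, h j * ((n:ℝ)⁻¹ * d2 g θstar j i + V j i)| :=
          abs_add_three _ _ _
      _ ≤ M/3 + M/3 + M/3 := by
          have hT' : |α n * T| ≤ M/3 := by
            rw [abs_mul, abs_of_pos (hαpos n)]; exact bT
          exact add_le_add (add_le_add hT' bG) bE
      _ = M := by ring
  -- bound the bad event by the union of exceptional events
  have hsub : {ω | ∃ h : EuclideanSpace ℝ (Fin p), ‖h‖ ≤ r ∧
      M < |α n * (Real.log (L n ω (θstar + (Real.sqrt (α n * (n : ℝ)))⁻¹ • h)) -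
              Real.log (L n ω θstar))
            - Real.sqrt (α n) *
                ∑ i, ∑ j, h i * V i j * Δ n ω j
            + (1 / 2) * ∑ i, ∑ j, h i * V i j * h j|} ⊆
      {ω | δ₁ < ‖(WithLp.equiv 2 (Fin p → ℝ)).symm (fun i =>
          (Real.sqrt n)⁻¹ * d1 (fun θ => Real.log (L n ω θ)) θstar i -
            ∑ j, V i j * Δ n ω j) - (0 : EuclideanSpace ℝ (Fin p))‖} ∪
      ((⋃ ij : Fin p × Fin p, {ω | δ₂ < ‖(n:ℝ)⁻¹ *
            d2 (fun θ => Real.log (L n ω θ)) θstar ij.1 ij.2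
          + V ij.1 ij.2 - (0:ℝ)‖}) ∪
        ({ω | K < Mt n ω / (n:ℝ)} ∪
          {ω | ¬ (ContDiffOn ℝ 3 (fun θ => Real.log (L n ω θ))
              (Metric.closedBall θstar r₀) ∧
            ∀ θ ∈ Metric.closedBall θstar r₀, ∀ i j k : Fin p,
              |d3 (fun θ' => Real.log (L n ω θ')) θ i j k| < Mt n ω)})) := by
    intro ω hω
    by_contra hout
    simp only [Set.mem_union, Set.mem_iUnion, Set.mem_setOf_eq, not_or, not_lt,
      not_exists, not_not] at hout
    obtain ⟨h1, h2, h3, h4⟩ := hout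
    obtain ⟨h, hhr, hgt⟩ := hω
    have hfin := hgood ω h4.1 h4.2 (by simpa [sub_zero] using h1)
      (fun i j => by simpa [Real.norm_eq_abs, sub_zero] using h2 (i, j)) h3 h hhr
    exact absurd hgt (not_lt.mpr hfin)
  -- measure bounds for each exceptional event
  have hB' : P n (⋃ ij : Fin p × Fin p, {ω | δ₂ < ‖(n:ℝ)⁻¹ *
        d2 (fun θ => Real.log (L n ω θ)) θstar ij.1 ij.2
      + V ij.1 ij.2 - (0:ℝ)‖}) ≤ ENNReal.ofReal (ε/3) := by
    refine le_trans (measure_iUnion_fintype_le _ _) ?_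
    refine le_trans (Finset.sum_le_sum (fun ij _ => (hQe ij.1 ij.2).le)) ?_
    rw [Finset.sum_const, Finset.card_univ, nsmul_eq_mul, Fintype.card_prod,
      Fintype.card_fin]
    rw [← ENNReal.ofReal_natCast (p*p), ← ENNReal.ofReal_mul (Nat.cast_nonneg _)]
    apply ENNReal.ofReal_le_ofReal
    push_cast
    rw [show (p:ℝ) * (p:ℝ) * (ε/(3*((p:ℝ)^2+1)))
        = ((p:ℝ)^2 * ε)/(3*((p:ℝ)^2+1)) from by ring,
      div_le_div_iff₀ (by positivity) (by norm_num : (0:ℝ) < 3)]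
    linarith only [hε.le]
  have hC' : P n {ω | K < Mt n ω / (n:ℝ)} ≤ ENNReal.ofReal (ε/3) := by
    refine hSt.trans (ENNReal.ofReal_le_ofReal ?_)
    rw [hKdef, div_div_eq_mul_div,
      div_le_div_iff₀ (by linarith only [hC0] : (0:ℝ) < 3*C+3) (by norm_num : (0:ℝ) < 3)]
    linarith only [hε.le]
  have hCD : P n ({ω | K < Mt n ω / (n:ℝ)} ∪
      {ω | ¬ (ContDiffOn ℝ 3 (fun θ => Real.log (L n ω θ))
          (Metric.closedBall θstar r₀) ∧
        ∀ θ ∈ Metric.closedBall θstar r₀, ∀ i j k : Fin p,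
          |d3 (fun θ' => Real.log (L n ω θ')) θ i j k| < Mt n ω)})
      ≤ ENNReal.ofReal (ε/3) := by
    refine le_trans (measure_union_le _ _) ?_
    rw [hNb, add_zero]
    exact hC'
  refine lt_of_le_of_lt (measure_mono hsub) (lt_of_le_of_lt (measure_union_le _ _) ?_)
  refine lt_of_le_of_lt (add_le_add_right (le_trans (measure_union_le _ _)
    (add_le_add hB' hCD)) _) ?_
  have hfin3 : ENNReal.ofReal (ε/3) + (ENNReal.ofReal (ε/3) + ENNReal.ofReal (ε/3))
      = ENNReal.ofReal ε := by
    rw [← ENNReal.ofReal_add (by linarith only [hε] : (0:ℝ) ≤ ε/3) (by linarith only [hε] : (0:ℝ) ≤ ε/3),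
      ← ENNReal.ofReal_add (by linarith only [hε] : (0:ℝ) ≤ ε/3) (by linarith only [hε] : (0:ℝ) ≤ ε/3 + ε/3)]
    congr 1
    ring
  calc P n {ω | δ₁ < ‖(WithLp.equiv 2 (Fin p → ℝ)).symm (fun i =>
          (Real.sqrt n)⁻¹ * d1 (fun θ => Real.log (L n ω θ)) θstar i -
            ∑ j, V i j * Δ n ω j) - (0 : EuclideanSpace ℝ (Fin p))‖}
        + (ENNReal.ofReal (ε/3) + ENNReal.ofReal (ε/3))
      < ENNReal.ofReal (ε/3) + (ENNReal.ofReal (ε/3) + ENNReal.ofReal (ε/3)) :=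
        ENNReal.add_lt_add_right
          (ENNReal.add_ne_top.mpr ⟨ENNReal.ofReal_ne_top, ENNReal.ofReal_ne_top⟩) hQg
    _ = ENNReal.ofReal ε := hfin3
end
end
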